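/- arXiv:0712.2214 — 9 statements merged into one kernel-verified Lean document; each statement's English description precedes it below -/
import Mathlib

section
/- If p = (x, y) and q = (x', y) differ only in coordinates x_1, …, x_{i−1} (i.e., they share y = (x_i, …, x_r)), then Δ_{α_i}(p,q) = 0, where Δ_β(p,q) is the infimum over all finite chains p = p_0, p_1, …, p_m = q of the sum Σ_j D(p_{j−1}, p_j)^β. -/
/-- If `p` and `q` agree in all coordinates `x_i, …, x_r`, then `Δ_{α_i}(p,q) = 0`,
where `Δ_β(p,q)` is the infimum over finite chains from `p` to `q` of `Σ D(p_{j-1},p_j)^β`. -/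
theorem stmt_2 (r : ℕ) (n : Fin (r + 1) → ℕ) (α : Fin (r + 1) → ℝ)
    (hα : ∀ i, 0 < α i) (hmono : StrictMono α)
    (D : (∀ i, EuclideanSpace ℝ (Fin (n i))) → (∀ i, EuclideanSpace ℝ (Fin (n i))) → ℝ)
    (hD : ∀ x y, D x y = ⨆ i, ‖x i - y i‖ ^ (1 / α i))
    (Δ : ℝ → (∀ i, EuclideanSpace ℝ (Fin (n i))) → (∀ i, EuclideanSpace ℝ (Fin (n i))) → ℝ)
    (hΔ : ∀ β p q, Δ β p q = sInf {s : ℝ |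
        ∃ (m : ℕ) (c : Fin (m + 1) → (∀ i, EuclideanSpace ℝ (Fin (n i)))),
          c 0 = p ∧ c (Fin.last m) = q ∧
          s = ∑ j : Fin m, D (c j.castSucc) (c j.succ) ^ β})
    (i : Fin (r + 1)) (p q : ∀ i, EuclideanSpace ℝ (Fin (n i)))
    (hshare : ∀ j, i ≤ j → p j = q j) :
    Δ (α i) p q = 0 := by
  have hβ : 0 < α i := hα i
  rw [hΔ]
  set S : Set ℝ := {s : ℝ |
      ∃ (m : ℕ) (c : Fin (m + 1) → (∀ i, EuclideanSpace ℝ (Fin (n i)))),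
        c 0 = p ∧ c (Fin.last m) = q ∧
        s = ∑ j : Fin m, D (c j.castSucc) (c j.succ) ^ α i} with hS
  have hDnonneg : ∀ x y, 0 ≤ D x y := by
    intro x y
    rw [hD]
    exact Real.iSup_nonneg fun k => Real.rpow_nonneg (norm_nonneg _) _
  have hlb : ∀ s ∈ S, (0 : ℝ) ≤ s := by
    rintro s ⟨m, c, -, -, rfl⟩
    exact Finset.sum_nonneg fun j _ => Real.rpow_nonneg (hDnonneg _ _) _
  have hbdd : BddBelow S := ⟨0, hlb⟩
  have hne : S.Nonempty := by
    refine ⟨D p q ^ α i, 1, ![p, q], rfl, rfl, ?_⟩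
    simp
  refine le_antisymm ?_ (le_csInf hne hlb)
  -- abbreviations
  set A : Fin (r + 1) → ℝ := fun k => ‖q k - p k‖ with hA
  have hAnn : ∀ k, 0 ≤ A k := fun k => norm_nonneg _
  have hA0 : ∀ k, ¬ k < i → A k = 0 := by
    intro k hk
    have : p k = q k := hshare k (le_of_not_gt hk)
    simp [hA, this]
  -- the bounding sequence
  have key : Filter.Tendsto
      (fun m : ℕ => ∑ k : Fin (r + 1), A k ^ (α i / α k) * (m : ℝ) ^ (1 - α i / α k))
      Filter.atTop (nhds 0) := by
    have : (0 : ℝ) = ∑ k : Fin (r + 1), (0 : ℝ) := by simp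
    rw [this]
    refine tendsto_finset_sum _ fun k _ => ?_
    by_cases hk : k < i
    · have hek : 1 < α i / α k := (one_lt_div (hα k)).2 (hmono hk)
      have h1 : Filter.Tendsto (fun x : ℝ => x ^ (1 - α i / α k)) Filter.atTop (nhds 0) := by
        have := tendsto_rpow_neg_atTop (y := α i / α k - 1) (by linarith)
        convert this using 2 with x
        ring_nf
      have h2 := (h1.comp tendsto_natCast_atTop_atTop).const_mul (A k ^ (α i / α k))
      simpa using h2
    · have : A k = 0 := hA0 k hk
      have he : α i / α k ≠ 0 := ne_of_gt (div_pos hβ (hα k))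
      simp [this, Real.zero_rpow he]
  refine le_of_forall_pos_le_add fun ε hε => ?_
  rw [zero_add]
  obtain ⟨m, hmε, hm1⟩ :=
    ((key.eventually (gt_mem_nhds hε)).and (Filter.eventually_ge_atTop 1)).exists
  have hm0 : (0 : ℝ) < m := by exact_mod_cast hm1
  -- the chain
  set c : Fin (m + 1) → (∀ i, EuclideanSpace ℝ (Fin (n i))) :=
    fun j k => p k + ((j : ℝ) / m) • (q k - p k) with hc
  have hc0 : c 0 = p := by
    funext k
    simp [hc]
  have hclast : c (Fin.last m) = q := by
    funext k
    have : ((m : ℝ)) / m = 1 := div_self (ne_of_gt hm0)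
    simp [hc, Fin.last, this]
  -- step distances
  have hstep : ∀ j : Fin m, ∀ k, ‖c j.castSucc k - c j.succ k‖ = A k / m := by
    intro j k
    have : c j.castSucc k - c j.succ k = ((-1 : ℝ) / m) • (q k - p k) := by
      simp only [hc, Fin.coe_castSucc, Fin.val_succ]
      push_cast
      rw [add_sub_add_left_eq_sub, ← sub_smul]
      congr 1
      ring
    rw [this, norm_smul]
    simp [hA, abs_of_pos hm0, div_eq_mul_inv, norm_sub_rev (q k) (p k), mul_comm]
  -- the element of S
  set s : ℝ := ∑ j : Fin m, D (c j.castSucc) (c j.succ) ^ α i with hsdef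
  have hsmem : s ∈ S := ⟨m, c, hc0, hclast, rfl⟩
  have hDle : ∀ j : Fin m,
      D (c j.castSucc) (c j.succ) ^ α i ≤ ∑ k : Fin (r + 1), (A k / m) ^ (α i / α k) := by
    intro j
    have hDeq : D (c j.castSucc) (c j.succ) = ⨆ k, (A k / m) ^ (1 / α k) := by
      rw [hD]
      congr 1
      funext k
      rw [hstep j k]
    obtain ⟨k0, hk0⟩ := Finite.exists_max fun k => (A k / m) ^ (1 / α k)
    have hsup_le : D (c j.castSucc) (c j.succ) ≤ (A k0 / m) ^ (1 / α k0) := by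
      rw [hDeq]; exact ciSup_le hk0
    have hnn : 0 ≤ (A k0 / m) ^ (1 / α k0) := Real.rpow_nonneg (by positivity) _
    calc D (c j.castSucc) (c j.succ) ^ α i
        ≤ ((A k0 / m) ^ (1 / α k0)) ^ α i :=
          Real.rpow_le_rpow (hDnonneg _ _) hsup_le hβ.le
      _ = (A k0 / m) ^ (α i / α k0) := by
          rw [← Real.rpow_mul (by positivity)]
          congr 1
          field_simp
      _ ≤ ∑ k : Fin (r + 1), (A k / m) ^ (α i / α k) := by
          refine Finset.single_le_sum (f := fun k => (A k / (m:ℝ)) ^ (α i / α k))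
            (fun k _ => Real.rpow_nonneg (by positivity) _)
            (Finset.mem_univ k0)
  have hsle : s ≤ ∑ k : Fin (r + 1), A k ^ (α i / α k) * (m : ℝ) ^ (1 - α i / α k) := by
    calc s ≤ ∑ _j : Fin m, ∑ k : Fin (r + 1), (A k / m) ^ (α i / α k) :=
          Finset.sum_le_sum fun j _ => hDle j
      _ = (m : ℝ) * ∑ k : Fin (r + 1), (A k / m) ^ (α i / α k) := by
          rw [Finset.sum_const]
          simp [mul_comm]
      _ = ∑ k : Fin (r + 1), A k ^ (α i / α k) * (m : ℝ) ^ (1 - α i / α k) := by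
          rw [Finset.mul_sum]
          refine Finset.sum_congr rfl fun k _ => ?_
          rw [Real.div_rpow (hAnn k) hm0.le, Real.rpow_sub hm0, Real.rpow_one]
          field_simp
  exact (csInf_le hbdd hsmem).trans (hsle.trans hmε.le)
end

section
/- If p = (x,y) and q = (x',y') with y ≠ y' (where y = (x_i,…,x_r) are the last coordinates), then Δ_{α_i}(p,q) > 0. Combined with the previous direction: Δ_{α_i}(p,q) = 0 if and only if p and q agree in all coordinates x_i, …, x_r. -/
open Filter

private lemma aux_rpow_add_le {a b θ : ℝ} (ha : 0 ≤ a) (hb : 0 ≤ b) (hθ : 0 ≤ θ)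
    (hθ1 : θ ≤ 1) : (a + b) ^ θ ≤ a ^ θ + b ^ θ := by
  lift a to NNReal using ha
  lift b to NNReal using hb
  have := NNReal.rpow_add_le_add_rpow a b hθ hθ1
  exact_mod_cast this

private lemma aux_rpow_sum_le {ι : Type*} (s : Finset ι) (f : ι → ℝ)
    (hf : ∀ x ∈ s, 0 ≤ f x) {θ : ℝ} (hθ : 0 < θ) (hθ1 : θ ≤ 1) :
    (∑ x ∈ s, f x) ^ θ ≤ ∑ x ∈ s, f x ^ θ := by
  induction s using Finset.cons_induction with
  | empty => simp [Real.zero_rpow hθ.ne']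
  | cons a s ha ih =>
    rw [Finset.sum_cons, Finset.sum_cons]
    have hT : 0 ≤ ∑ x ∈ s, f x :=
      Finset.sum_nonneg fun x hx => hf x (Finset.mem_cons.2 (Or.inr hx))
    calc (f a + ∑ x ∈ s, f x) ^ θ ≤ f a ^ θ + (∑ x ∈ s, f x) ^ θ :=
          aux_rpow_add_le (hf a (Finset.mem_cons_self _ _)) hT hθ.le hθ1
      _ ≤ f a ^ θ + ∑ x ∈ s, f x ^ θ := by
          gcongr
          exact ih fun x hx => hf x (Finset.mem_cons.2 (Or.inr hx))

/-- If `p` and `q` differ in some coordinate `x_j` with `j ≥ i`, then `Δ_{α_i}(p,q) > 0`;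
combined with the other direction: `Δ_{α_i}(p,q) = 0` iff `p,q` agree in coordinates
`x_i, …, x_r`. -/
theorem stmt_3 (r : ℕ) (n : Fin (r + 1) → ℕ) (α : Fin (r + 1) → ℝ)
    (hα : ∀ i, 0 < α i) (hmono : StrictMono α)
    (D : (∀ i, EuclideanSpace ℝ (Fin (n i))) → (∀ i, EuclideanSpace ℝ (Fin (n i))) → ℝ)
    (hD : ∀ x y, D x y = ⨆ i, ‖x i - y i‖ ^ (1 / α i))
    (Δ : ℝ → (∀ i, EuclideanSpace ℝ (Fin (n i))) → (∀ i, EuclideanSpace ℝ (Fin (n i))) → ℝ)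
    (hΔ : ∀ β p q, Δ β p q = sInf {s : ℝ |
        ∃ (m : ℕ) (c : Fin (m + 1) → (∀ i, EuclideanSpace ℝ (Fin (n i)))),
          c 0 = p ∧ c (Fin.last m) = q ∧
          s = ∑ j : Fin m, D (c j.castSucc) (c j.succ) ^ β})
    (i : Fin (r + 1)) (p q : ∀ i, EuclideanSpace ℝ (Fin (n i))) :
    ((∃ j, i ≤ j ∧ p j ≠ q j) → 0 < Δ (α i) p q) ∧
    (Δ (α i) p q = 0 ↔ ∀ j, i ≤ j → p j = q j) := by
  have X := True
  set S : Set ℝ := {s : ℝ |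
      ∃ (m : ℕ) (c : Fin (m + 1) → (∀ i, EuclideanSpace ℝ (Fin (n i)))),
        c 0 = p ∧ c (Fin.last m) = q ∧
        s = ∑ j : Fin m, D (c j.castSucc) (c j.succ) ^ (α i)} with hS
  have hΔi : Δ (α i) p q = sInf S := hΔ (α i) p q
  -- basic facts about D
  have hDnonneg : ∀ x y : (∀ i, EuclideanSpace ℝ (Fin (n i))), 0 ≤ D x y := by
    intro x y
    rw [hD]
    exact Real.iSup_nonneg fun j => Real.rpow_nonneg (norm_nonneg _) _
  have hDge : ∀ (x y : (∀ i, EuclideanSpace ℝ (Fin (n i)))) (j : Fin (r + 1)), ‖x j - y j‖ ^ (1 / α j) ≤ D x y := by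
    intro x y j
    rw [hD]
    exact le_ciSup (f := fun j => ‖x j - y j‖ ^ (1 / α j))
      (Set.Finite.bddAbove (Set.finite_range _)) j
  -- the set S is nonempty
  have hne : S.Nonempty := by
    refine ⟨D p q ^ (α i), 1, fun k => if k = 0 then p else q, ?_, ?_, ?_⟩
    · simp
    · simp [Fin.last]
    · simp [Fin.sum_univ_one]
  -- elements of S are nonnegative
  have hSnonneg : ∀ s ∈ S, (0:ℝ) ≤ s := by
    rintro s ⟨m, c, -, -, rfl⟩
    exact Finset.sum_nonneg fun k _ => Real.rpow_nonneg (hDnonneg _ _) _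
  have hbdd : BddBelow S := ⟨0, fun s hs => hSnonneg s hs⟩
  -- forward direction: a positive lower bound
  have hpos : (∃ j, i ≤ j ∧ p j ≠ q j) → 0 < Δ (α i) p q := by
    rintro ⟨j, hij, hpq⟩
    set θ : ℝ := α i / α j with hθdef
    have hθpos : 0 < θ := div_pos (hα i) (hα j)
    have hθ1 : θ ≤ 1 := (div_le_one (hα j)).mpr (hmono.monotone hij)
    have hd : (0:ℝ) < ‖p j - q j‖ := norm_pos_iff.mpr (sub_ne_zero_of_ne hpq)
    have hεpos : 0 < ‖p j - q j‖ ^ θ := Real.rpow_pos_of_pos hd θ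
    rw [hΔi]
    refine lt_of_lt_of_le hεpos (le_csInf hne ?_)
    rintro s ⟨m, c, hc0, hcm, rfl⟩
    -- triangle inequality along the chain in coordinate j
    have htri : ‖p j - q j‖ ≤ ∑ k : Fin m, ‖c k.castSucc j - c k.succ j‖ := by
      set f : ℕ → EuclideanSpace ℝ (Fin (n j)) :=
        fun k => c ⟨min k m, Nat.lt_succ_of_le (min_le_right k m)⟩ j with hf
      have h0 : f 0 = p j := by
        simp only [hf, Nat.min_eq_left (Nat.zero_le m)]
        rw [show (⟨0, Nat.lt_succ_of_le (Nat.zero_le m)⟩ : Fin (m+1)) = 0 from rfl, hc0]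
      have hm : f m = q j := by
        simp only [hf, Nat.min_self]
        rw [show (⟨m, Nat.lt_succ_of_le (le_refl m)⟩ : Fin (m+1)) = Fin.last m from rfl, hcm]
      have := dist_le_range_sum_dist f m
      rw [h0, hm, dist_eq_norm] at this
      refine this.trans (le_of_eq ?_)
      rw [← Fin.sum_univ_eq_sum_range (fun k => dist (f k) (f (k+1))) m]
      refine Finset.sum_congr rfl fun k _ => ?_
      have hk := k.isLt
      have e1 : (⟨min (k : ℕ) m, Nat.lt_succ_of_le (min_le_right _ m)⟩ : Fin (m+1))
          = k.castSucc := by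
        ext; simp only [Fin.coe_castSucc]; omega
      have e2 : (⟨min ((k : ℕ) + 1) m, Nat.lt_succ_of_le (min_le_right _ m)⟩ : Fin (m+1))
          = k.succ := by
        ext; simp only [Fin.val_succ]; omega
      have h1 : f (k : ℕ) = c k.castSucc j := by
        show c _ j = c _ j
        rw [e1]
      have h2 : f ((k : ℕ) + 1) = c k.succ j := by
        show c _ j = c _ j
        rw [e2]
      rw [h1, h2, dist_eq_norm]
    calc ‖p j - q j‖ ^ θ
        ≤ (∑ k : Fin m, ‖c k.castSucc j - c k.succ j‖) ^ θ :=
          Real.rpow_le_rpow hd.le htri hθpos.le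
      _ ≤ ∑ k : Fin m, ‖c k.castSucc j - c k.succ j‖ ^ θ :=
          aux_rpow_sum_le _ _ (fun k _ => norm_nonneg _) hθpos hθ1
      _ ≤ ∑ k : Fin m, D (c k.castSucc) (c k.succ) ^ (α i) := by
          refine Finset.sum_le_sum fun k _ => ?_
          have h1 : ‖c k.castSucc j - c k.succ j‖ ^ θ
              = (‖c k.castSucc j - c k.succ j‖ ^ (1 / α j)) ^ (α i) := by
            rw [← Real.rpow_mul (norm_nonneg _)]
            rw [hθdef, one_div, div_eq_inv_mul]
          rw [h1]
          exact Real.rpow_le_rpow (Real.rpow_nonneg (norm_nonneg _) _)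
            (hDge _ _ j) (hα i).le
  -- reverse direction: Δ = 0 if all coordinates ≥ i agree
  have hzero : (∀ j, i ≤ j → p j = q j) → Δ (α i) p q = 0 := by
    intro hag
    have hub : 0 ≤ Δ (α i) p q := by
      rw [hΔi]; exact le_csInf hne hSnonneg
    refine le_antisymm ?_ hub
    refine le_of_forall_pos_le_add ?_
    intro ε hε
    rw [zero_add]
    set d : Fin (r + 1) → ℝ := fun j => ‖p j - q j‖ with hd
    -- find a good number of subdivision steps N
    have hev : ∀ j : Fin (r + 1), ∀ᶠ N : ℕ in atTop,
        (d j / N) ^ (1 / α j) ≤ (ε / (2 * N)) ^ (1 / α i) := by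
      intro j
      by_cases hdj : d j = 0
      · filter_upwards [eventually_ge_atTop 1] with N hN
        have h1 := hα j
        have h2 := hα i
        rw [hdj, zero_div, Real.zero_rpow (by positivity)]
        positivity
      · -- then p j ≠ q j, hence j < i, hence α j < α i
        have hji : j < i := by
          by_contra h
          exact hdj (by simp [hd, hag j (not_lt.mp h)])
        have hαji : α j < α i := hmono hji
        set γ : ℝ := α j / α i with hγ
        have hγpos : 0 < γ := div_pos (hα j) (hα i)
        have hγ1 : γ < 1 := (div_lt_one (hα i)).mpr hαji
        have htend : Tendsto (fun N : ℕ => (ε/2) ^ γ * (N:ℝ) ^ (1 - γ)) atTop atTop := by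
          refine Tendsto.const_mul_atTop (Real.rpow_pos_of_pos (by positivity) γ) ?_
          exact (tendsto_rpow_atTop (by linarith)).comp tendsto_natCast_atTop_atTop
        filter_upwards [htend.eventually_ge_atTop (d j), eventually_ge_atTop 1] with N h1 h2
        have hN0 : (0:ℝ) < N := by exact_mod_cast h2
        have key : d j / N ≤ (ε / (2 * N)) ^ γ := by
          have hrw : (ε / (2 * N) : ℝ) = (ε/2) / N := by ring
          rw [hrw, Real.div_rpow (by positivity) hN0.le, div_le_div_iff₀ hN0
            (Real.rpow_pos_of_pos hN0 γ)]
          calc d j * (N:ℝ) ^ γ ≤ ((ε/2) ^ γ * (N:ℝ) ^ (1 - γ)) * (N:ℝ) ^ γ := by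
                exact mul_le_mul_of_nonneg_right h1 (Real.rpow_nonneg hN0.le γ)
            _ = (ε/2) ^ γ * N := by
                rw [mul_assoc, ← Real.rpow_add hN0]
                norm_num
        have haj := (hα j).ne'
        have hai := (hα i).ne'
        have haj0 := hα j
        calc (d j / N) ^ (1 / α j) ≤ ((ε / (2 * N)) ^ γ) ^ (1 / α j) :=
              Real.rpow_le_rpow (by positivity) key (by positivity)
          _ = (ε / (2 * N)) ^ (1 / α i) := by
              rw [← Real.rpow_mul (by positivity)]
              congr 1
              rw [hγ]
              field_simp
    obtain ⟨N, hNcond, hN1⟩ :=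
      ((eventually_all.mpr hev).and (eventually_ge_atTop 1)).exists
    have hN0 : (0:ℝ) < N := by exact_mod_cast hN1
    -- the straight-line chain with N steps
    set c : Fin (N + 1) → (∀ i, EuclideanSpace ℝ (Fin (n i))) := fun k j => p j + ((k:ℝ)/(N:ℝ)) • (q j - p j) with hc
    have hc0 : c 0 = p := by
      funext j
      simp [hc]
    have hcN : c (Fin.last N) = q := by
      funext j
      simp only [hc, Fin.val_last]
      rw [div_self hN0.ne', one_smul]
      abel
    have hstep : ∀ k : Fin N, D (c k.castSucc) (c k.succ) ^ (α i) ≤ ε / (2 * N) := by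
      intro k
      have hDle : D (c k.castSucc) (c k.succ) ≤ (ε / (2 * N)) ^ (1 / α i) := by
        rw [hD]
        refine ciSup_le fun j => ?_
        have hdiff : c k.castSucc j - c k.succ j = (-(1/(N:ℝ))) • (q j - p j) := by
          simp only [hc, Fin.coe_castSucc, Fin.val_succ]
          rw [add_sub_add_left_eq_sub, ← sub_smul]
          congr 1
          push_cast
          field_simp
          ring
        have hnorm : ‖c k.castSucc j - c k.succ j‖ = d j / N := by
          rw [hdiff, norm_smul]
          simp [hd, norm_sub_rev (q j) (p j), abs_of_pos (by positivity : (0:ℝ) < 1/(N:ℝ))]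
          ring
        rw [hnorm]
        exact hNcond j
      calc D (c k.castSucc) (c k.succ) ^ (α i)
          ≤ ((ε / (2 * N)) ^ (1 / α i)) ^ (α i) :=
            Real.rpow_le_rpow (hDnonneg _ _) hDle (hα i).le
        _ = ε / (2 * N) := by
            rw [← Real.rpow_mul (by positivity), one_div,
              inv_mul_cancel₀ (hα i).ne', Real.rpow_one]
    have hmem : (∑ k : Fin N, D (c k.castSucc) (c k.succ) ^ (α i)) ∈ S :=
      ⟨N, c, hc0, hcN, rfl⟩
    have hsum : (∑ k : Fin N, D (c k.castSucc) (c k.succ) ^ (α i)) ≤ ε := by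
      calc (∑ k : Fin N, D (c k.castSucc) (c k.succ) ^ (α i))
          ≤ ∑ _k : Fin N, ε / (2 * N) := Finset.sum_le_sum fun k _ => hstep k
        _ = N * (ε / (2 * N)) := by simp [Finset.sum_const, mul_comm]
        _ = ε / 2 := by field_simp
        _ ≤ ε := by linarith
    rw [hΔi]
    exact (csInf_le hbdd hmem).trans hsum
  refine ⟨hpos, ⟨?_, hzero⟩⟩
  intro h0 j hij
  by_contra hne'
  have := hpos ⟨j, hij, hne'⟩
  rw [h0] at this
  exact lt_irrefl 0 this
end

section
/- Every K-bilipschitz map F of (ℝ^n, D) is lower-triangular: it has the form F(x_1, …, x_r) = (f_1(x_1,…,x_r), f_2(x_2,…,x_r), …, f_r(x_r)); i.e., the i-th component of F(x) depends only on x_i, x_{i+1}, …, x_r. -/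
/-- Every `K`-bilipschitz bijection of `(ℝ^n, D)` is lower-triangular: its `i`-th component
depends only on the coordinates `x_i, x_{i+1}, …, x_r`. -/
theorem stmt_5 (r : ℕ) (n : Fin (r + 1) → ℕ) (α : Fin (r + 1) → ℝ)
    (hα : ∀ i, 0 < α i) (hmono : StrictMono α)
    (D : (∀ i, EuclideanSpace ℝ (Fin (n i))) → (∀ i, EuclideanSpace ℝ (Fin (n i))) → ℝ)
    (hD : ∀ x y, D x y = ⨆ i, ‖x i - y i‖ ^ (1 / α i))
    (F : (∀ i, EuclideanSpace ℝ (Fin (n i))) → ∀ i, EuclideanSpace ℝ (Fin (n i)))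
    (hFbij : Function.Bijective F) (K : ℝ) (hK : 1 ≤ K)
    (hbilip : ∀ p q, D p q / K ≤ D (F p) (F q) ∧ D (F p) (F q) ≤ K * D p q) :
    ∀ (i : Fin (r + 1)) (x x' : ∀ i, EuclideanSpace ℝ (Fin (n i))),
      (∀ j, i ≤ j → x j = x' j) → F x i = F x' i := by
  intro i x x' hxx'
  have hK0 : (0:ℝ) ≤ K := by linarith
  have hbdd : ∀ p q : (∀ i, EuclideanSpace ℝ (Fin (n i))),
      BddAbove (Set.range fun j => ‖p j - q j‖ ^ (1 / α j)) :=
    fun p q => (Set.finite_range _).bddAbove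
  have hDnonneg : ∀ p q, 0 ≤ D p q := by
    intro p q
    rw [hD]
    exact le_trans (Real.rpow_nonneg (norm_nonneg _) _) (le_ciSup (hbdd p q) i)
  have hDsymm : ∀ p q, D p q = D q p := by
    intro p q
    rw [hD, hD]
    exact iSup_congr fun j => by rw [norm_sub_rev]
  have hcoord : ∀ p q (j : Fin (r+1)), ‖p j - q j‖ ≤ D p q ^ (α j) := by
    intro p q j
    have h1 : ‖p j - q j‖ ^ (1 / α j) ≤ D p q := by
      rw [hD]; exact le_ciSup (hbdd p q) j
    have h2 := Real.rpow_le_rpow (Real.rpow_nonneg (norm_nonneg _) _) h1 (hα j).le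
    rwa [← Real.rpow_mul (norm_nonneg _), one_div_mul_cancel (hα j).ne',
      Real.rpow_one] at h2
  rcases Nat.eq_zero_or_pos i.val with hi0 | hipos
  · have hx : x = x' := funext fun j => hxx' j (by rw [Fin.le_def, hi0]; exact Nat.zero_le _)
    rw [hx]
  -- main case: i.val ≥ 1
  set i' : Fin (r + 1) := ⟨i.val - 1, by omega⟩ with hi'
  set β := α i' with hβ
  have hβpos : 0 < β := hα i'
  have hβlt : β < α i := hmono (by rw [Fin.lt_def]; show i.val - 1 < i.val; omega)
  have hji : ∀ j : Fin (r+1), j < i → α j ≤ β :=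
    fun j hj => hmono.monotone (by rw [Fin.le_def]; simp [hi']; omega)
  set M := D x x' with hM
  have hM0 : 0 ≤ M := hDnonneg x x'
  have key : ∀ N : ℕ, 1 ≤ N →
      ‖F x' i - F x i‖ ≤ (K * M) ^ (α i) * (N:ℝ) ^ (1 - α i / β) := by
    intro N hN
    have hN0 : (0:ℝ) < N := by exact_mod_cast hN
    set z : ℕ → (∀ j, EuclideanSpace ℝ (Fin (n j))) :=
      fun k j => x j + ((k:ℝ)/N) • (x' j - x j) with hz
    have hz0 : z 0 = x := by
      funext j; simp [hz]
    have hzN : z N = x' := by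
      funext j
      simp only [hz, div_self hN0.ne', one_smul]
      abel
    have hstep : ∀ k : ℕ, D (z k) (z (k+1)) ≤ (N:ℝ)⁻¹ ^ (1/β) * M := by
      intro k
      rw [hD]
      apply ciSup_le
      intro j
      have hdiff : z k j - z (k+1) j = (-(N:ℝ)⁻¹) • (x' j - x j) := by
        have hsc : (k:ℝ)/N - ((k:ℝ)+1)/N = -(N:ℝ)⁻¹ := by
          field_simp
          ring
        simp only [hz]
        push_cast
        rw [add_sub_add_left_eq_sub, ← sub_smul, hsc]
      have hnorm : ‖z k j - z (k+1) j‖ = (N:ℝ)⁻¹ * ‖x' j - x j‖ := by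
        rw [hdiff, norm_smul, Real.norm_eq_abs, abs_neg, abs_inv, Nat.abs_cast]
      rcases lt_or_ge j i with hj | hj
      · -- j < i
        rw [hnorm, Real.mul_rpow (by positivity) (norm_nonneg _)]
        apply mul_le_mul
        · exact Real.rpow_le_rpow_of_exponent_ge (by positivity)
            (inv_le_one_of_one_le₀ (by exact_mod_cast hN))
            (one_div_le_one_div_of_le (hα j) (hji j hj))
        · rw [norm_sub_rev, hM, hD]
          exact le_ciSup (hbdd x x') j
        · positivity
        · positivity
      · -- i ≤ j : coordinates agree
        have : x' j - x j = 0 := sub_eq_zero_of_eq (hxx' j hj).symm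
        rw [hnorm, this, norm_zero, mul_zero,
          Real.zero_rpow (one_div_ne_zero (hα j).ne')]
        exact mul_nonneg (Real.rpow_nonneg (by positivity) _) hM0
    have hFstep : ∀ k : ℕ,
        ‖F (z (k+1)) i - F (z k) i‖ ≤ (K * ((N:ℝ)⁻¹ ^ (1/β) * M)) ^ (α i) := by
      intro k
      refine le_trans (hcoord (F (z (k+1))) (F (z k)) i) ?_
      refine Real.rpow_le_rpow (hDnonneg _ _) ?_ (hα i).le
      refine le_trans (hbilip (z (k+1)) (z k)).2 ?_
      rw [hDsymm]
      exact mul_le_mul_of_nonneg_left (hstep k) hK0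
    have htel : F x' i - F x i = ∑ k ∈ Finset.range N, (F (z (k+1)) i - F (z k) i) := by
      rw [Finset.sum_range_sub (fun k => F (z k) i) N, hz0, hzN]
    have hsum : ‖F x' i - F x i‖ ≤ (N:ℝ) * (K * ((N:ℝ)⁻¹ ^ (1/β) * M)) ^ (α i) := by
      rw [htel]
      refine le_trans (norm_sum_le _ _) ?_
      calc ∑ k ∈ Finset.range N, ‖F (z (k+1)) i - F (z k) i‖
          ≤ ∑ k ∈ Finset.range N, (K * ((N:ℝ)⁻¹ ^ (1/β) * M)) ^ (α i) :=
            Finset.sum_le_sum fun k _ => hFstep k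
        _ = (N:ℝ) * (K * ((N:ℝ)⁻¹ ^ (1/β) * M)) ^ (α i) := by
            rw [Finset.sum_const, Finset.card_range, nsmul_eq_mul]
    refine hsum.trans_eq ?_
    have hbase : K * ((N:ℝ)⁻¹ ^ (1/β) * M) = (K * M) * (N:ℝ)⁻¹ ^ (1/β) := by ring
    rw [hbase, Real.mul_rpow (by positivity) (by positivity),
      ← Real.rpow_mul (by positivity : (0:ℝ) ≤ (N:ℝ)⁻¹),
      Real.inv_rpow hN0.le, one_div_mul_eq_div,
      Real.rpow_sub hN0, Real.rpow_one, div_eq_mul_inv]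
    ring
  have hc : 0 < α i / β - 1 := by
    have h1 : 1 < α i / β := (one_lt_div hβpos).mpr hβlt
    linarith
  have htend : Filter.Tendsto (fun N : ℕ => (K * M) ^ (α i) * (N:ℝ) ^ (1 - α i / β))
      Filter.atTop (nhds 0) := by
    have h1 : Filter.Tendsto (fun t : ℝ => t ^ (1 - α i / β)) Filter.atTop (nhds 0) := by
      have h2 := tendsto_rpow_neg_atTop hc
      simpa [neg_sub] using h2
    have h3 := (h1.comp tendsto_natCast_atTop_atTop).const_mul ((K * M) ^ (α i))
    simpa using h3
  have hle : ‖F x' i - F x i‖ ≤ 0 :=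
    ge_of_tendsto htend (Filter.eventually_atTop.2 ⟨1, key⟩)
  have hz := norm_le_zero_iff.mp hle
  exact (sub_eq_zero.mp hz).symm
end

section
/- If F(x_1,…,x_r) = (f_1(x_1,…,x_r), …, f_r(x_r)) is a K-bilipschitz map of (ℝ^n, D), then for l > i the component f_i is Hölder continuous in the variable x_l with exponent α_i/α_l: |f_i(x_i, …, x_l, …, x_r) − f_i(x_i, …, x_l', …, x_r)| ≤ K^{α_i} |x_l − x_l'|^{α_i/α_l}. -/
/-- For `l > i`, the component `f_i` of a `K`-bilipschitz map of `(ℝ^n, D)` is Hölder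
continuous in the variable `x_l` with exponent `α_i/α_l`. -/
theorem stmt_7 (r : ℕ) (n : Fin (r + 1) → ℕ) (α : Fin (r + 1) → ℝ)
    (hα : ∀ i, 0 < α i) (hmono : StrictMono α)
    (D : (∀ i, EuclideanSpace ℝ (Fin (n i))) → (∀ i, EuclideanSpace ℝ (Fin (n i))) → ℝ)
    (hD : ∀ x y, D x y = ⨆ i, ‖x i - y i‖ ^ (1 / α i))
    (F : (∀ i, EuclideanSpace ℝ (Fin (n i))) → ∀ i, EuclideanSpace ℝ (Fin (n i)))
    (hFbij : Function.Bijective F) (K : ℝ) (hK : 1 ≤ K)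
    (hbilip : ∀ p q, D p q / K ≤ D (F p) (F q) ∧ D (F p) (F q) ≤ K * D p q) :
    ∀ (i l : Fin (r + 1)), i < l →
      ∀ (x x' : ∀ i, EuclideanSpace ℝ (Fin (n i))),
        (∀ j, j ≠ l → x j = x' j) →
        ‖F x i - F x' i‖ ≤ K ^ α i * ‖x l - x' l‖ ^ (α i / α l) := by
  intro i l _ x x' hx
  have hK0 : (0 : ℝ) < K := lt_of_lt_of_le one_pos hK
  set c : ℝ := ‖x l - x' l‖ ^ (1 / α l) with hc
  have hc0 : 0 ≤ c := Real.rpow_nonneg (norm_nonneg _) _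
  -- D x x' = c
  have hDxx : D x x' = c := by
    rw [hD]
    apply le_antisymm
    · apply ciSup_le
      intro j
      by_cases hj : j = l
      · subst hj; exact le_refl _
      · rw [hx j hj, sub_self, norm_zero,
          Real.zero_rpow (one_div_ne_zero (hα j).ne')]
        exact hc0
    · exact le_ciSup (f := fun j => ‖x j - x' j‖ ^ (1 / α j)) (Set.Finite.bddAbove (Set.finite_range _)) l
  -- component bound
  have h1 : ‖F x i - F x' i‖ ^ (1 / α i) ≤ K * c := by
    calc ‖F x i - F x' i‖ ^ (1 / α i)
        ≤ D (F x) (F x') := by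
          rw [hD]
          exact le_ciSup (f := fun j => ‖F x j - F x' j‖ ^ (1 / α j)) (Set.Finite.bddAbove (Set.finite_range _)) i
      _ ≤ K * D x x' := (hbilip x x').2
      _ = K * c := by rw [hDxx]
  have hai : 0 < α i := hα i
  have h2 : (‖F x i - F x' i‖ ^ (1 / α i)) ^ α i ≤ (K * c) ^ α i :=
    Real.rpow_le_rpow (Real.rpow_nonneg (norm_nonneg _) _) h1 hai.le
  rw [← Real.rpow_mul (norm_nonneg _), one_div, inv_mul_cancel₀ hai.ne',
    Real.rpow_one, Real.mul_rpow hK0.le hc0, hc,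
    ← Real.rpow_mul (norm_nonneg _), one_div, inv_mul_eq_div] at h2
  exact h2
end

section
/- Every similarity of (ℝ^n, D) with similarity factor t is the composition of the standard dilation δ_t with a map of the form (x_1, …, x_r) ↦ (A_1(x_1 + B_1), …, A_r(x_r + B_r)), where A_i ∈ O(n_i) and B_i ∈ ℝ^{n_i}. -/
open Real Filter RealInnerProductSpace

namespace Stmt8


lemma rpow_base_cancel {a b c : ℝ} (ha : 0 ≤ a) (hb : 0 ≤ b) (hc : c ≠ 0)
    (h : a ^ c = b ^ c) : a = b := by
  have h2 := congrArg (fun x : ℝ => x ^ c⁻¹) h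
  simpa [← Real.rpow_mul ha, ← Real.rpow_mul hb, mul_inv_cancel₀ hc] using h2

lemma bddA {k : ℕ} (g : Fin k → ℝ) : BddAbove (Set.range g) :=
  (Set.finite_range g).bddAbove

lemma le_sup {k : ℕ} (g : Fin (k+1) → ℝ) (i : Fin (k+1)) : g i ≤ ⨆ j, g j :=
  le_ciSup (bddA g) i

lemma sup_nonneg' {k : ℕ} (g : Fin (k+1) → ℝ) (hg : ∀ i, 0 ≤ g i) : 0 ≤ ⨆ j, g j :=
  le_trans (hg 0) (le_sup g 0)

lemma sup_split {k : ℕ} (g : Fin (k+2) → ℝ) :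
    (⨆ i, g i) = max (g 0) (⨆ j : Fin (k+1), g j.succ) := by
  apply le_antisymm
  · refine ciSup_le fun i => ?_
    induction i using Fin.cases with
    | zero => exact le_max_left _ _
    | succ j => exact le_trans (le_sup (fun j => g j.succ) j) (le_max_right _ _)
  · refine max_le (le_sup g 0) (ciSup_le fun j => le_sup g j.succ)

lemma sup_single {k : ℕ} (g : Fin (k+1) → ℝ) (h0 : 0 ≤ g 0)
    (h : ∀ i, i ≠ 0 → g i = 0) : (⨆ i, g i) = g 0 := by
  apply le_antisymm
  · refine ciSup_le fun i => ?_
    by_cases hi : i = 0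
    · subst hi; exact le_rfl
    · rw [h i hi]; exact h0
  · exact le_sup g 0

lemma sup_one (g : Fin 1 → ℝ) : (⨆ i, g i) = g 0 := ciSup_unique



lemma exists_affine {m : ℕ} (f : EuclideanSpace ℝ (Fin m) → EuclideanSpace ℝ (Fin m))
    (hbij : Function.Bijective f) (hiso : ∀ u v, ‖f u - f v‖ = ‖u - v‖) :
    ∃ A : EuclideanSpace ℝ (Fin m) ≃ₗᵢ[ℝ] EuclideanSpace ℝ (Fin m), ∀ u, f u = A u + f 0 := by
  let e := Equiv.ofBijective f hbij
  have hIso : Isometry e := Isometry.of_dist_eq fun u v => by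
    simpa [dist_eq_norm, e] using hiso u v
  let ie : EuclideanSpace ℝ (Fin m) ≃ᵢ EuclideanSpace ℝ (Fin m) := ⟨e, hIso⟩
  refine ⟨ie.toRealLinearIsometryEquiv, fun u => ?_⟩
  have h := ie.toRealLinearIsometryEquiv_apply u
  have hie : ∀ v, ie v = f v := fun v => rfl
  rw [hie] at h
  rw [h]
  have : ie 0 = f 0 := rfl
  rw [this]
  abel

lemma affine_far_eq {m : ℕ}
    (g h : EuclideanSpace ℝ (Fin m) ≃ₗᵢ[ℝ] EuclideanSpace ℝ (Fin m))
    (b c : EuclideanSpace ℝ (Fin m)) (c0 : ℝ)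
    (hfar : ∀ u v, c0 ≤ ‖u - v‖ → ‖(g u + b) - (h v + c)‖ = ‖u - v‖)
    (w : EuclideanSpace ℝ (Fin m)) : g w + b = h w + c := by
  rcases subsingleton_or_nontrivial (EuclideanSpace ℝ (Fin m)) with hs | hs
  · exact Subsingleton.elim _ _
  obtain ⟨x, hx⟩ := exists_ne (0 : EuclideanSpace ℝ (Fin m))
  set e : EuclideanSpace ℝ (Fin m) := ‖x‖⁻¹ • x with he_def
  have hxn : ‖x‖ ≠ 0 := norm_ne_zero_iff.mpr hx
  have he : ‖e‖ = 1 := by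
    rw [he_def, norm_smul, norm_inv, norm_norm]
    field_simp
  set d : EuclideanSpace ℝ (Fin m) := (g w + b) - (h w + c) with hd_def
  have key : ∀ s : ℝ, c0 ≤ s → 0 ≤ s → ‖d‖ ^ 2 + 2 * s * ⟪d, g e⟫ = 0 := by
    intro s hs1 hs2
    have h1 : ‖(w + s • e) - w‖ = s := by
      simp [norm_smul, he, abs_of_nonneg hs2]
    have h2 := hfar (w + s • e) w (by rw [h1]; exact hs1)
    rw [h1] at h2
    have h3 : g (w + s • e) + b - (h w + c) = d + s • g e := by
      rw [map_add, map_smul, hd_def]; abel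
    rw [h3] at h2
    have h4 : ‖d + s • g e‖ ^ 2 = s ^ 2 := by rw [h2]
    have h5 : ‖g e‖ = 1 := by rw [g.norm_map, he]
    have h6 : ‖d + s • g e‖ ^ 2 = ‖d‖ ^ 2 + 2 * ⟪d, s • g e⟫ + ‖s • g e‖ ^ 2 :=
      norm_add_sq_real d (s • g e)
    rw [real_inner_smul_right, norm_smul, h5, mul_one, Real.norm_eq_abs, sq_abs] at h6
    nlinarith [h4, h6]
  have hc1 : c0 ≤ max c0 0 + 1 := le_trans (le_max_left _ _) (by linarith)
  have hc2 : c0 ≤ max c0 0 + 2 := le_trans (le_max_left _ _) (by linarith)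
  have hn1 : (0:ℝ) ≤ max c0 0 + 1 := le_trans (le_max_right _ _) (by linarith)
  have hn2 : (0:ℝ) ≤ max c0 0 + 2 := le_trans (le_max_right _ _) (by linarith)
  have e1 := key (max c0 0 + 1) hc1 hn1
  have e2 := key (max c0 0 + 2) hc2 hn2
  have hd2 : ‖d‖ ^ 2 = 0 := by nlinarith [e1, e2]
  have hd0 : d = 0 := by
    have := pow_eq_zero_iff (n := 2) (by norm_num) |>.mp hd2
    exact norm_eq_zero.mp this
  have := sub_eq_zero.mp (hd_def ▸ hd0)
  exact this






/-- The distance function. -/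
noncomputable def Dd {k : ℕ} (n : Fin (k+1) → ℕ) (α : Fin (k+1) → ℝ)
    (p q : ∀ i, EuclideanSpace ℝ (Fin (n i))) : ℝ :=
  ⨆ i, ‖p i - q i‖ ^ (1/α i)

lemma Dd_nonneg {k : ℕ} (n : Fin (k+1) → ℕ) (α : Fin (k+1) → ℝ)
    (p q : ∀ i, EuclideanSpace ℝ (Fin (n i))) : 0 ≤ Dd n α p q :=
  le_trans (Real.rpow_nonneg (norm_nonneg _) _) (le_sup (fun i => ‖p i - q i‖ ^ (1/α i)) 0)

lemma term_le_Dd {k : ℕ} (n : Fin (k+1) → ℕ) (α : Fin (k+1) → ℝ) (hα : ∀ i, 0 < α i)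
    (p q : ∀ i, EuclideanSpace ℝ (Fin (n i))) (i : Fin (k+1)) :
    ‖p i - q i‖ ≤ (Dd n α p q) ^ (α i) := by
  have h := le_sup (fun i => ‖p i - q i‖ ^ (1/α i)) i
  have h2 := Real.rpow_le_rpow (Real.rpow_nonneg (norm_nonneg _) _) h (hα i).le
  rwa [← Real.rpow_mul (norm_nonneg _), one_div, inv_mul_cancel₀ (hα i).ne',
    Real.rpow_one] at h2

lemma Dd_eq_single {k : ℕ} (n : Fin (k+1) → ℕ) (α : Fin (k+1) → ℝ) (hα : ∀ i, 0 < α i)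
    (p q : ∀ i, EuclideanSpace ℝ (Fin (n i))) (h : ∀ i, i ≠ 0 → p i = q i) :
    Dd n α p q = ‖p 0 - q 0‖ ^ (1/α 0) := by
  refine sup_single _ (Real.rpow_nonneg (norm_nonneg _) _) fun i hi => ?_
  rw [h i hi, sub_self, norm_zero]
  exact Real.zero_rpow (one_div_ne_zero (hα i).ne')


/-- Chain property: intrinsic characterization of pairs differing only in coordinate 0. -/
def Chain {k : ℕ} (n : Fin (k+1) → ℕ) (α : Fin (k+1) → ℝ)
    (p q : ∀ i, EuclideanSpace ℝ (Fin (n i))) : Prop :=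
  ∀ m : ℕ, 0 < m → ∃ c : ℕ → (∀ i, EuclideanSpace ℝ (Fin (n i))),
    c 0 = p ∧ c m = q ∧
    ∀ j < m, Dd n α (c j) (c (j+1)) = Dd n α p q * (((m : ℝ)) ^ (1/α 0))⁻¹

lemma chain_iff {k : ℕ} (n : Fin (k+1) → ℕ) (α : Fin (k+1) → ℝ)
    (hα : ∀ i, 0 < α i) (hmono : StrictMono α)
    (p q : ∀ i, EuclideanSpace ℝ (Fin (n i))) :
    Chain n α p q ↔ ∀ i, i ≠ 0 → p i = q i := by
  constructor
  · intro hch i hi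
    have hipos : (0 : Fin (k+1)) < i := Fin.pos_of_ne_zero hi
    have hαlt : α 0 < α i := hmono hipos
    have hrat : 1 < α i / α 0 := (one_lt_div (hα 0)).mpr hαlt
    set C : ℝ := (Dd n α p q) ^ (α i) with hC
    set e : ℝ := -(α i / α 0 - 1) with he
    have claim : ∀ m : ℕ, 0 < m → dist (p i) (q i) ≤ C * (m : ℝ) ^ e := by
      intro m hm
      obtain ⟨c, hc0, hcm, hstep⟩ := hch m hm
      have hmR : (0 : ℝ) < (m : ℝ) := Nat.cast_pos.mpr hm
      have hstepnn : (0:ℝ) ≤ Dd n α p q * (((m : ℝ)) ^ (1/α 0))⁻¹ :=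
        mul_nonneg (Dd_nonneg n α p q)
          (inv_nonneg.mpr (Real.rpow_nonneg hmR.le _))
      have heach : ∀ j < m, dist (c j i) (c (j+1) i) ≤
          (Dd n α p q * (((m : ℝ)) ^ (1/α 0))⁻¹) ^ (α i) := by
        intro j hj
        rw [dist_eq_norm]
        calc ‖c j i - c (j+1) i‖ ≤ (Dd n α (c j) (c (j+1))) ^ (α i) :=
              term_le_Dd n α hα _ _ i
          _ = (Dd n α p q * (((m : ℝ)) ^ (1/α 0))⁻¹) ^ (α i) := by rw [hstep j hj]
      have hsum : dist (p i) (q i) ≤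
          ∑ j ∈ Finset.range m, dist (c j i) (c (j+1) i) := by
        have := dist_le_range_sum_dist (fun j => c j i) m
        rwa [hc0, hcm] at this
      have hsum2 : (∑ j ∈ Finset.range m, dist (c j i) (c (j+1) i)) ≤
          (m : ℝ) * (Dd n α p q * (((m : ℝ)) ^ (1/α 0))⁻¹) ^ (α i) := by
        calc (∑ j ∈ Finset.range m, dist (c j i) (c (j+1) i))
            ≤ ∑ j ∈ Finset.range m, (Dd n α p q * (((m : ℝ)) ^ (1/α 0))⁻¹) ^ (α i) :=
              Finset.sum_le_sum (fun j hj => heach j (Finset.mem_range.mp hj))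
          _ = (m : ℝ) * (Dd n α p q * (((m : ℝ)) ^ (1/α 0))⁻¹) ^ (α i) := by
              rw [Finset.sum_const, Finset.card_range, nsmul_eq_mul]
      have halg : (m : ℝ) * (Dd n α p q * (((m : ℝ)) ^ (1/α 0))⁻¹) ^ (α i)
          = C * (m : ℝ) ^ e := by
        have h1 : (((m : ℝ)) ^ (1/α 0))⁻¹ ^ (α i) = (m:ℝ) ^ (1/α 0 * -1 * α i) := by
          rw [← Real.rpow_neg_one ((m : ℝ) ^ (1/α 0)), ← Real.rpow_mul hmR.le,
            ← Real.rpow_mul hmR.le]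
        rw [Real.mul_rpow (Dd_nonneg n α p q)
          (inv_nonneg.mpr (Real.rpow_nonneg hmR.le _)), h1, ← hC]
        have h2 : (m:ℝ) = (m:ℝ) ^ (1:ℝ) := (Real.rpow_one _).symm
        have h3 : e = 1 + 1/α 0 * -1 * α i := by
          rw [he]; field_simp; ring
        calc (m:ℝ) * (C * (m : ℝ) ^ (1/α 0 * -1 * α i))
            = C * ((m:ℝ) ^ (1:ℝ) * (m : ℝ) ^ (1/α 0 * -1 * α i)) := by
              rw [← h2]; ring
          _ = C * (m : ℝ) ^ (1 + 1/α 0 * -1 * α i) := by rw [← Real.rpow_add hmR]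
          _ = C * (m : ℝ) ^ e := by rw [h3]
      rw [← halg]
      exact le_trans hsum hsum2
    have hten : Tendsto (fun m : ℕ => C * (m : ℝ) ^ e) atTop (nhds 0) := by
      have h1 : Tendsto (fun x : ℝ => x ^ e) atTop (nhds 0) := by
        rw [he]; exact tendsto_rpow_neg_atTop (by linarith)
      have h2 := h1.comp (tendsto_natCast_atTop_atTop (R := ℝ))
      have h3 := h2.const_mul C
      simpa using h3
    have hle : dist (p i) (q i) ≤ 0 := by
      refine ge_of_tendsto hten ?_
      filter_upwards [eventually_ge_atTop 1] with m hm
      exact claim m hm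
    exact eq_of_dist_eq_zero (le_antisymm hle dist_nonneg)
  · intro h m hm
    have hmR : (0 : ℝ) < (m : ℝ) := Nat.cast_pos.mpr hm
    refine ⟨fun j => Function.update p 0 (p 0 + ((j : ℝ)/(m : ℝ)) • (q 0 - p 0)),
      ?_, ?_, ?_⟩
    · simp [Function.update_eq_self]
    · funext i
      beta_reduce
      by_cases hi : i = 0
      · subst hi
        rw [Function.update_self]
        rw [div_self hmR.ne']
        simp
      · rw [Function.update_of_ne hi]
        exact h i hi
    · intro j hj
      beta_reduce
      have hcoord0 : ∀ (a : ℝ), Function.update p 0 (p 0 + a • (q 0 - p 0)) 0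
          = p 0 + a • (q 0 - p 0) := fun a => Function.update_self _ _ _
      have hterm0 : ‖(Function.update p 0 (p 0 + ((j : ℝ)/(m : ℝ)) • (q 0 - p 0))) 0
          - (Function.update p 0 (p 0 + (((j+1 : ℕ) : ℝ)/(m : ℝ)) • (q 0 - p 0))) 0‖
          = ‖p 0 - q 0‖ / (m : ℝ) := by
        rw [hcoord0, hcoord0]
        have : (p 0 + ((j : ℝ)/(m : ℝ)) • (q 0 - p 0))
            - (p 0 + (((j+1 : ℕ) : ℝ)/(m : ℝ)) • (q 0 - p 0))
            = (((j : ℝ)/(m : ℝ)) - (((j+1 : ℕ) : ℝ)/(m : ℝ))) • (q 0 - p 0) := by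
          rw [sub_smul]; abel
        rw [this, norm_smul]
        have hco : ((j : ℝ)/(m : ℝ)) - (((j+1 : ℕ) : ℝ)/(m : ℝ)) = -(1/(m:ℝ)) := by
          push_cast; field_simp; ring
        rw [hco, Real.norm_eq_abs, abs_neg, abs_of_pos (by positivity), norm_sub_rev]
        field_simp
      rw [Dd_eq_single n α hα _ _ (fun i hi => by
          rw [Function.update_of_ne hi, Function.update_of_ne hi]),
        Dd_eq_single n α hα p q h, hterm0,
        Real.div_rpow (norm_nonneg _) hmR.le]
      rw [div_eq_mul_inv]


lemma Dd_self {k : ℕ} (n : Fin (k+1) → ℕ) (α : Fin (k+1) → ℝ) (hα : ∀ i, 0 < α i)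
    (p : ∀ i, EuclideanSpace ℝ (Fin (n i))) : Dd n α p p = 0 := by
  have h : (fun i => ‖p i - p i‖ ^ (1/α i)) = fun _ => (0:ℝ) :=
    funext fun i => by rw [sub_self, norm_zero, Real.zero_rpow (one_div_ne_zero (hα i).ne')]
  rw [Dd, h, ciSup_const]

lemma step (r : ℕ) (n : Fin (r+2) → ℕ) (α : Fin (r+2) → ℝ)
    (hα : ∀ i, 0 < α i) (hmono : StrictMono α)
    (IH : ∀ (n' : Fin (r+1) → ℕ) (α' : Fin (r+1) → ℝ), (∀ j, 0 < α' j) → StrictMono α' →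
      ∀ H' : (∀ j, EuclideanSpace ℝ (Fin (n' j))) → (∀ j, EuclideanSpace ℝ (Fin (n' j))),
      Function.Bijective H' → (∀ p q, Dd n' α' (H' p) (H' q) = Dd n' α' p q) →
      ∃ (A' : ∀ j, EuclideanSpace ℝ (Fin (n' j)) ≃ₗᵢ[ℝ] EuclideanSpace ℝ (Fin (n' j)))
        (B' : ∀ j, EuclideanSpace ℝ (Fin (n' j))), ∀ y j, H' y j = A' j (y j) + B' j)
    (H : (∀ i, EuclideanSpace ℝ (Fin (n i))) → (∀ i, EuclideanSpace ℝ (Fin (n i))))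
    (hbij : Function.Bijective H)
    (hiso : ∀ p q, Dd n α (H p) (H q) = Dd n α p q) :
    ∃ (A : ∀ i, EuclideanSpace ℝ (Fin (n i)) ≃ₗᵢ[ℝ] EuclideanSpace ℝ (Fin (n i)))
      (B : ∀ i, EuclideanSpace ℝ (Fin (n i))),
      ∀ x i, H x i = A i (x i) + B i := by
  classical
  set n' : Fin (r+1) → ℕ := fun j => n j.succ with hn'
  set α' : Fin (r+1) → ℝ := fun j => α j.succ with hα'def
  have hα' : ∀ j, 0 < α' j := fun j => hα j.succ
  have hmono' : StrictMono α' := fun j k h => hmono (Fin.succ_lt_succ_iff.mpr h)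
  obtain ⟨G, hGH, hHG⟩ : ∃ G : (∀ i, EuclideanSpace ℝ (Fin (n i))) →
      (∀ i, EuclideanSpace ℝ (Fin (n i))), (∀ x, G (H x) = x) ∧ (∀ x, H (G x) = x) :=
    ⟨fun x => (Equiv.ofBijective H hbij).symm x,
      fun x => (Equiv.ofBijective H hbij).symm_apply_apply x,
      fun x => (Equiv.ofBijective H hbij).apply_symm_apply x⟩
  have hisoG : ∀ p q, Dd n α (G p) (G q) = Dd n α p q := by
    intro p q
    conv_rhs => rw [← hHG p, ← hHG q]
    rw [hiso]
  have hTEH : ∀ p q, (∀ i, i ≠ 0 → p i = q i) → ∀ i, i ≠ 0 → H p i = H q i := by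
    intro p q h
    refine (chain_iff n α hα hmono (H p) (H q)).mp ?_
    have hch := (chain_iff n α hα hmono p q).mpr h
    intro m hm
    obtain ⟨c, hc0, hcm, hstep⟩ := hch m hm
    refine ⟨fun j => H (c j), by show H (c 0) = H p; rw [hc0],
      by show H (c m) = H q; rw [hcm], fun j hj => ?_⟩
    show Dd n α (H (c j)) (H (c (j+1))) = _
    rw [hiso, hstep j hj, hiso]
  have hTEG : ∀ p q, (∀ i, i ≠ 0 → p i = q i) → ∀ i, i ≠ 0 → G p i = G q i := by
    intro p q h
    refine (chain_iff n α hα hmono (G p) (G q)).mp ?_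
    have hch := (chain_iff n α hα hmono p q).mpr h
    intro m hm
    obtain ⟨c, hc0, hcm, hstep⟩ := hch m hm
    refine ⟨fun j => G (c j), by show G (c 0) = G p; rw [hc0],
      by show G (c m) = G q; rw [hcm], fun j hj => ?_⟩
    show Dd n α (G (c j)) (G (c (j+1))) = _
    rw [hisoG, hstep j hj, hisoG]
  obtain ⟨H', hH'⟩ : ∃ H' : (∀ j, EuclideanSpace ℝ (Fin (n' j))) →
      (∀ j, EuclideanSpace ℝ (Fin (n' j))),
      ∀ y, H' y = Fin.tail (H (Fin.cons 0 y)) := ⟨_, fun y => rfl⟩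
  obtain ⟨G', hG'⟩ : ∃ G' : (∀ j, EuclideanSpace ℝ (Fin (n' j))) →
      (∀ j, EuclideanSpace ℝ (Fin (n' j))),
      ∀ y, G' y = Fin.tail (G (Fin.cons 0 y)) := ⟨_, fun y => rfl⟩
  have hTE0 : ∀ x : ∀ i, EuclideanSpace ℝ (Fin (n i)), ∀ i, i ≠ 0 →
      x i = (Fin.cons (0:EuclideanSpace ℝ (Fin (n 0))) (Fin.tail x) :
        ∀ i, EuclideanSpace ℝ (Fin (n i))) i := by
    intro x i hi
    induction i using Fin.cases with
    | zero => exact absurd rfl hi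
    | succ j => rw [Fin.cons_succ]; rfl
  have htailH : ∀ x, Fin.tail (H x) = H' (Fin.tail x) := by
    intro x
    funext j
    have h2 := hTEH x (Fin.cons 0 (Fin.tail x)) (hTE0 x) j.succ (Fin.succ_ne_zero j)
    rw [hH']
    exact h2
  have htailG : ∀ x, Fin.tail (G x) = G' (Fin.tail x) := by
    intro x
    funext j
    have h2 := hTEG x (Fin.cons 0 (Fin.tail x)) (hTE0 x) j.succ (Fin.succ_ne_zero j)
    rw [hG']
    exact h2
  have hG'H' : ∀ y, G' (H' y) = y := by
    intro y
    rw [hH']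
    have h1 : G' (Fin.tail (H (Fin.cons 0 y))) = Fin.tail (G (H (Fin.cons 0 y))) :=
      (htailG _).symm
    rw [h1, hGH, Fin.tail_cons]
  have hH'G' : ∀ y, H' (G' y) = y := by
    intro y
    rw [hG']
    have h1 : H' (Fin.tail (G (Fin.cons 0 y))) = Fin.tail (H (G (Fin.cons 0 y))) :=
      (htailH _).symm
    rw [h1, hHG, Fin.tail_cons]
  have hbij' : Function.Bijective H' :=
    Function.bijective_iff_has_inverse.mpr ⟨G', hG'H', hH'G'⟩
  have hsplit : ∀ p q : ∀ i, EuclideanSpace ℝ (Fin (n i)),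
      Dd n α p q = max (‖p 0 - q 0‖ ^ (1/α 0)) (Dd n' α' (Fin.tail p) (Fin.tail q)) :=
    fun p q => sup_split (fun i => ‖p i - q i‖ ^ (1/α i))
  have hisoH'le : ∀ y z, Dd n' α' (H' y) (H' z) ≤ Dd n' α' y z := by
    intro y z
    have h1 := hiso (Fin.cons 0 y) (Fin.cons 0 z)
    rw [hsplit (H (Fin.cons 0 y)) (H (Fin.cons 0 z)), hsplit (Fin.cons 0 y) (Fin.cons 0 z),
      htailH, htailH, Fin.tail_cons, Fin.tail_cons, Fin.cons_zero, Fin.cons_zero,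
      sub_self, norm_zero, Real.zero_rpow (one_div_ne_zero (hα 0).ne'),
      max_eq_right (Dd_nonneg n' α' y z)] at h1
    exact h1 ▸ le_max_right _ _
  have hisoG'le : ∀ y z, Dd n' α' (G' y) (G' z) ≤ Dd n' α' y z := by
    intro y z
    have h1 := hisoG (Fin.cons 0 y) (Fin.cons 0 z)
    rw [hsplit (G (Fin.cons 0 y)) (G (Fin.cons 0 z)), hsplit (Fin.cons 0 y) (Fin.cons 0 z),
      htailG, htailG, Fin.tail_cons, Fin.tail_cons, Fin.cons_zero, Fin.cons_zero,
      sub_self, norm_zero, Real.zero_rpow (one_div_ne_zero (hα 0).ne'),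
      max_eq_right (Dd_nonneg n' α' y z)] at h1
    exact h1 ▸ le_max_right _ _
  have hiso' : ∀ y z, Dd n' α' (H' y) (H' z) = Dd n' α' y z := by
    intro y z
    refine le_antisymm (hisoH'le y z) ?_
    have h2 := hisoG'le (H' y) (H' z)
    rw [hG'H', hG'H'] at h2
    exact h2
  obtain ⟨A', B', hA'⟩ := IH n' α' hα' hmono' H' hbij' hiso'
  obtain ⟨f, hf⟩ : ∃ f : (∀ j, EuclideanSpace ℝ (Fin (n' j))) →
      EuclideanSpace ℝ (Fin (n 0)) → EuclideanSpace ℝ (Fin (n 0)),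
      ∀ y u, f y u = H (Fin.cons u y) 0 := ⟨_, fun y u => rfl⟩
  have hfH : ∀ x, H x 0 = f (Fin.tail x) (x 0) := by
    intro x
    rw [hf, Fin.cons_self_tail]
  have hcross : ∀ y z u v, max (‖f y u - f z v‖ ^ (1/α 0)) (Dd n' α' y z)
      = max (‖u - v‖ ^ (1/α 0)) (Dd n' α' y z) := by
    intro y z u v
    have h1 := hiso (Fin.cons u y) (Fin.cons v z)
    rw [hsplit (H (Fin.cons u y)) (H (Fin.cons v z)), hsplit (Fin.cons u y) (Fin.cons v z),
      htailH, htailH, Fin.tail_cons, Fin.tail_cons, Fin.cons_zero, Fin.cons_zero,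
      hiso' y z, ← hf, ← hf] at h1
    exact h1
  have hfiso : ∀ y u v, ‖f y u - f y v‖ = ‖u - v‖ := by
    intro y u v
    have h1 := hcross y y u v
    rw [Dd_self n' α' hα' y, max_eq_left (Real.rpow_nonneg (norm_nonneg _) _),
      max_eq_left (Real.rpow_nonneg (norm_nonneg _) _)] at h1
    exact rpow_base_cancel (norm_nonneg _) (norm_nonneg _) (one_div_ne_zero (hα 0).ne') h1
  have hfbij : ∀ y, Function.Bijective (f y) := by
    intro y
    constructor
    · intro u v huv
      rw [hf, hf] at huv
      have hx : H (Fin.cons u y) = H (Fin.cons v y) := by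
        funext i
        induction i using Fin.cases with
        | zero => exact huv
        | succ j =>
          have h1 : Fin.tail (H (Fin.cons u y)) = Fin.tail (H (Fin.cons v y)) := by
            rw [htailH, htailH, Fin.tail_cons, Fin.tail_cons]
          exact congrFun h1 j
      have h2 := hbij.1 hx
      have h3 := congrFun h2 0
      rwa [Fin.cons_zero, Fin.cons_zero] at h3
    · intro w
      obtain ⟨x, hx⟩ := hbij.2 (Fin.cons w (H' y))
      have htx : Fin.tail x = y := by
        apply hbij'.1
        rw [← htailH, hx, Fin.tail_cons]
      refine ⟨x 0, ?_⟩
      rw [hf, ← htx, Fin.cons_self_tail, hx, Fin.cons_zero]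
  obtain ⟨A0, hA0⟩ := exists_affine (f (fun _ => 0)) (hfbij _) (hfiso _)
  have hconst : ∀ y u, f y u = f (fun _ => 0) u := by
    intro y u
    obtain ⟨Ay, hAy⟩ := exists_affine (f y) (hfbij y) (hfiso y)
    set cD := Dd n' α' y (fun _ => 0) with hcD
    have hcDnn : 0 ≤ cD := Dd_nonneg _ _ _ _
    have hfar : ∀ u v, cD ^ (α 0) + 1 ≤ ‖u - v‖ →
        ‖(Ay u + f y 0) - (A0 v + f (fun _ => 0) 0)‖ = ‖u - v‖ := by
      intro u v huv
      rw [← hAy, ← hA0]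
      have h0 : (cD ^ (α 0)) ^ (1/α 0) = cD := by
        rw [← Real.rpow_mul hcDnn, mul_one_div_cancel (hα 0).ne', Real.rpow_one]
      have hlt : cD ^ (α 0) < ‖u - v‖ := lt_of_lt_of_le (lt_add_one _) huv
      have hgt : cD < ‖u - v‖ ^ (1/α 0) := by
        rw [← h0]
        exact Real.rpow_lt_rpow (Real.rpow_nonneg hcDnn _) hlt
          (one_div_pos.mpr (hα 0))
      have h1 := hcross y (fun _ => 0) u v
      rw [max_eq_left hgt.le] at h1
      have h2 : ‖f y u - f (fun _ => 0) v‖ ^ (1/α 0) = ‖u - v‖ ^ (1/α 0) := by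
        rcases le_or_gt (‖f y u - f (fun _ => 0) v‖ ^ (1/α 0)) cD with hle | hlt2
        · rw [max_eq_right hle] at h1
          exact absurd h1 (ne_of_lt hgt)
        · rw [max_eq_left hlt2.le] at h1
          exact h1
      exact rpow_base_cancel (norm_nonneg _) (norm_nonneg _)
        (one_div_ne_zero (hα 0).ne') h2
    have h3 := affine_far_eq Ay A0 (f y 0) (f (fun _ => 0) 0) (cD ^ (α 0) + 1) hfar u
    rw [hAy, hA0]
    exact h3
  refine ⟨Fin.cons A0 A', Fin.cons (f (fun _ => 0) 0) B', ?_⟩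
  intro x i
  induction i using Fin.cases with
  | zero =>
    simp only [Fin.cons_zero]
    rw [hfH x, hconst (Fin.tail x) (x 0), hA0]
  | succ j =>
    simp only [Fin.cons_succ]
    have h1 : H x j.succ = H' (Fin.tail x) j := congrFun (htailH x) j
    rw [h1, hA']
    rfl

theorem core (r : ℕ) : ∀ (n : Fin (r+1) → ℕ) (α : Fin (r+1) → ℝ), (∀ i, 0 < α i) →
    StrictMono α →
    ∀ H : (∀ i, EuclideanSpace ℝ (Fin (n i))) → (∀ i, EuclideanSpace ℝ (Fin (n i))),
    Function.Bijective H →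
    (∀ p q, Dd n α (H p) (H q) = Dd n α p q) →
    ∃ (A : ∀ i, EuclideanSpace ℝ (Fin (n i)) ≃ₗᵢ[ℝ] EuclideanSpace ℝ (Fin (n i)))
      (B : ∀ i, EuclideanSpace ℝ (Fin (n i))),
      ∀ x i, H x i = A i (x i) + B i := by
  induction r with
  | zero =>
    intro n α hα hmono H hbij hiso
    obtain ⟨f, hf⟩ : ∃ f : EuclideanSpace ℝ (Fin (n 0)) → EuclideanSpace ℝ (Fin (n 0)),
        ∀ u, f u = H (Fin.cons u (fun j => j.elim0)) 0 := ⟨_, fun u => rfl⟩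
    have hemb : ∀ p : ∀ i, EuclideanSpace ℝ (Fin (n i)),
        (Fin.cons (p 0) (fun j => j.elim0) : ∀ i, EuclideanSpace ℝ (Fin (n i))) = p := by
      intro p
      funext i
      induction i using Fin.cases with
      | zero => rw [Fin.cons_zero]
      | succ j => exact j.elim0
    have hfH : ∀ p, H p 0 = f (p 0) := by
      intro p
      rw [hf, hemb]
    have hDone : ∀ p q : (∀ i, EuclideanSpace ℝ (Fin (n i))),
        Dd n α p q = ‖p 0 - q 0‖ ^ (1/α 0) :=
      fun p q => Dd_eq_single n α hα p q
        (fun i hi => absurd (Fin.fin_one_eq_zero i) hi)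
    have hfiso : ∀ u v, ‖f u - f v‖ = ‖u - v‖ := by
      intro u v
      have h1 := hiso (Fin.cons u (fun j => j.elim0)) (Fin.cons v (fun j => j.elim0))
      rw [hDone, hDone, hfH, hfH] at h1
      simp only [Fin.cons_zero] at h1
      exact rpow_base_cancel (norm_nonneg _) (norm_nonneg _)
        (one_div_ne_zero (hα 0).ne') h1
    have hfbij : Function.Bijective f := by
      constructor
      · intro u v huv
        rw [hf, hf] at huv
        have h2 : H (Fin.cons u fun j => j.elim0) = H (Fin.cons v fun j => j.elim0) := by
          funext i
          induction i using Fin.cases with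
          | zero => exact huv
          | succ j => exact j.elim0
        have h3 := hbij.1 h2
        have h4 := congrFun h3 0
        rwa [Fin.cons_zero, Fin.cons_zero] at h4
      · intro w
        obtain ⟨p, hp⟩ := hbij.2 (Fin.cons w (fun j => j.elim0))
        refine ⟨p 0, ?_⟩
        rw [hf, hemb, hp, Fin.cons_zero]
    obtain ⟨A0, hA0⟩ := exists_affine f hfbij hfiso
    refine ⟨Fin.cons A0 (fun j => j.elim0), Fin.cons (f 0) (fun j => j.elim0), ?_⟩
    intro x i
    induction i using Fin.cases with
    | zero =>
      simp only [Fin.cons_zero]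
      rw [hfH, hA0]
    | succ j => exact j.elim0
  | succ r IH =>
    intro n α hα hmono H hbij hiso
    exact step r n α hα hmono IH H hbij hiso

end Stmt8

/-- Every similarity of `(ℝ^n, D)` with factor `t` is the standard dilation `δ_t` composed
with `(x_1,…,x_r) ↦ (A_1(x_1+B_1), …, A_r(x_r+B_r))` with `A_i ∈ O(n_i)`, `B_i ∈ ℝ^{n_i}`. -/
theorem stmt_8 (r : ℕ) (n : Fin (r + 1) → ℕ) (α : Fin (r + 1) → ℝ)
    (hα : ∀ i, 0 < α i) (hmono : StrictMono α)
    (D : (∀ i, EuclideanSpace ℝ (Fin (n i))) → (∀ i, EuclideanSpace ℝ (Fin (n i))) → ℝ)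
    (hD : ∀ x y, D x y = ⨆ i, ‖x i - y i‖ ^ (1 / α i))
    (F : (∀ i, EuclideanSpace ℝ (Fin (n i))) → ∀ i, EuclideanSpace ℝ (Fin (n i)))
    (hFbij : Function.Bijective F) (t : ℝ) (ht : 0 < t)
    (hsim : ∀ p q, D (F p) (F q) = t * D p q) :
    ∃ (A : ∀ i, EuclideanSpace ℝ (Fin (n i)) ≃ₗᵢ[ℝ] EuclideanSpace ℝ (Fin (n i)))
      (B : ∀ i, EuclideanSpace ℝ (Fin (n i))),
      ∀ x i, F x i = t ^ α i • (A i) (x i + B i) := by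
  have hDdD : ∀ p q, Stmt8.Dd n α p q = D p q := fun p q => (hD p q).symm
  have htne : ∀ i, (t : ℝ) ^ α i ≠ 0 := fun i => (Real.rpow_pos_of_pos ht (α i)).ne'
  set H : (∀ i, EuclideanSpace ℝ (Fin (n i))) → (∀ i, EuclideanSpace ℝ (Fin (n i))) :=
    fun x i => (t ^ α i)⁻¹ • F x i with hHdef
  have hbijH : Function.Bijective H := by
    have hS : Function.Bijective
        (fun (x : ∀ i, EuclideanSpace ℝ (Fin (n i))) i => (t ^ α i)⁻¹ • x i) := by
      refine Function.bijective_iff_has_inverse.mpr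
        ⟨fun x i => (t ^ α i) • x i, fun x => ?_, fun x => ?_⟩
      · funext i
        show (t ^ α i) • ((t ^ α i)⁻¹ • x i) = x i
        rw [smul_smul, mul_inv_cancel₀ (htne i), one_smul]
      · funext i
        show (t ^ α i)⁻¹ • ((t ^ α i) • x i) = x i
        rw [smul_smul, inv_mul_cancel₀ (htne i), one_smul]
    exact hS.comp hFbij
  have hisoH : ∀ p q, Stmt8.Dd n α (H p) (H q) = Stmt8.Dd n α p q := by
    intro p q
    have hterm : ∀ i, ‖H p i - H q i‖ ^ (1/α i) = t⁻¹ * ‖F p i - F q i‖ ^ (1/α i) := by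
      intro i
      have h1 : H p i - H q i = (t ^ α i)⁻¹ • (F p i - F q i) := by
        rw [hHdef, smul_sub]
      have h4 : ((t ^ α i)⁻¹) ^ (1/α i) = t⁻¹ := by
        rw [← Real.rpow_neg ht.le, ← Real.rpow_mul ht.le]
        have h5 : -α i * (1/α i) = -1 := by rw [mul_one_div, neg_div, div_self (hα i).ne']
        rw [h5, Real.rpow_neg_one]
      rw [h1, norm_smul, Real.norm_eq_abs,
        abs_of_pos (inv_pos.mpr (Real.rpow_pos_of_pos ht (α i))),
        Real.mul_rpow (inv_nonneg.mpr (Real.rpow_pos_of_pos ht (α i)).le) (norm_nonneg _),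
        h4]
    have h2 : Stmt8.Dd n α (H p) (H q) = ⨆ i, t⁻¹ * ‖F p i - F q i‖ ^ (1/α i) := by
      rw [Stmt8.Dd]
      exact iSup_congr hterm
    rw [h2, ← Real.mul_iSup_of_nonneg (inv_nonneg.mpr ht.le)]
    have h3 : (⨆ i, ‖F p i - F q i‖ ^ (1/α i)) = Stmt8.Dd n α (F p) (F q) := rfl
    rw [h3, hDdD, hsim, hDdD p q, ← mul_assoc, inv_mul_cancel₀ ht.ne', one_mul]
  obtain ⟨A, B', hAB⟩ := Stmt8.core r n α hα hmono H hbijH hisoH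
  refine ⟨A, fun i => (A i).symm (B' i), ?_⟩
  intro x i
  have h1 : (t ^ α i)⁻¹ • F x i = A i (x i) + B' i := hAB x i
  have h2 : F x i = (t ^ α i) • (A i (x i) + B' i) := by
    rw [← h1, smul_smul, mul_inv_cancel₀ (htne i), one_smul]
  rw [h2, map_add, (A i).apply_symm_apply]
end

section
/- Suppose G(x,y) = (t^{α_1} A_y(x + B_y), g(y)) is a K-quasisimilarity of (ℝ^{n_1} × ℝ^{n'}, D), where A_y ∈ O(n_1) and B_y ∈ ℝ^{n_1} may depend on y ∈ ℝ^{n'}. Then A_y = A_{y'} for all y, y'; i.e., the rotational part is independent of y. -/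
/-- For a `(t,K)`-quasisimilarity `G(x,y) = (t^{α_1} A_y(x + B_y), g(y))` of
`ℝ^{n_1} × ℝ^{n'}` with the quasi-metric `D`, the rotational part `A_y` is independent
of `y`. -/
theorem stmt_9 (n1 n' : ℕ) (α1 : ℝ) (hα1 : 0 < α1)
    (D' : EuclideanSpace ℝ (Fin n') → EuclideanSpace ℝ (Fin n') → ℝ)
    (D : EuclideanSpace ℝ (Fin n1) × EuclideanSpace ℝ (Fin n') →
         EuclideanSpace ℝ (Fin n1) × EuclideanSpace ℝ (Fin n') → ℝ)
    (hD : ∀ p q, D p q = max (‖p.1 - q.1‖ ^ (1 / α1)) (D' p.2 q.2))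
    (t K : ℝ) (ht : 0 < t) (hK : 1 ≤ K)
    (A : EuclideanSpace ℝ (Fin n') →
         (EuclideanSpace ℝ (Fin n1) ≃ₗᵢ[ℝ] EuclideanSpace ℝ (Fin n1)))
    (B : EuclideanSpace ℝ (Fin n') → EuclideanSpace ℝ (Fin n1))
    (g : EuclideanSpace ℝ (Fin n') → EuclideanSpace ℝ (Fin n'))
    (G : EuclideanSpace ℝ (Fin n1) × EuclideanSpace ℝ (Fin n') →
         EuclideanSpace ℝ (Fin n1) × EuclideanSpace ℝ (Fin n'))
    (hG : ∀ p, G p = (t ^ α1 • (A p.2) (p.1 + B p.2), g p.2))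
    (hQS : ∀ p q, t / K * D p q ≤ D (G p) (G q) ∧ D (G p) (G q) ≤ t * K * D p q) :
    ∀ y y', A y = A y' := by
  intro y y'
  apply LinearIsometryEquiv.ext
  intro v
  by_contra hne
  set u : EuclideanSpace ℝ (Fin n1) := A y v - A y' v with hu
  have hu0 : u ≠ 0 := sub_ne_zero.mpr hne
  have hun : 0 < ‖u‖ := norm_pos_iff.mpr hu0
  set c : EuclideanSpace ℝ (Fin n1) := A y (B y) - A y' (B y') with hc
  set M : ℝ := max 0 (D' y y') with hM
  have hM0 : 0 ≤ M := le_max_left _ _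
  have hKpos : 0 < K := lt_of_lt_of_le one_pos hK
  have hKM : 0 ≤ K * M := mul_nonneg hKpos.le hM0
  set C : ℝ := (K * M) ^ α1 with hC
  have hα1' : (1 : ℝ) / α1 ≠ 0 := by positivity
  have key : ∀ s : ℝ, ‖s • u + c‖ ≤ C := by
    intro s
    set p : EuclideanSpace ℝ (Fin n1) × EuclideanSpace ℝ (Fin n') := (s • v, y)
    set q : EuclideanSpace ℝ (Fin n1) × EuclideanSpace ℝ (Fin n') := (s • v, y')
    have hDpq : D p q = M := by
      rw [hD]
      simp [p, q, Real.zero_rpow (inv_ne_zero (ne_of_gt hα1)), hM]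
    have h2 := (hQS p q).2
    rw [hDpq] at h2
    have hGp : G p = (t ^ α1 • (A y) (s • v + B y), g y) := by rw [hG]
    have hGq : G q = (t ^ α1 • (A y') (s • v + B y'), g y') := by rw [hG]
    have hfirst : ‖(G p).1 - (G q).1‖ ^ (1 / α1) ≤ t * K * M := by
      refine le_trans ?_ h2
      rw [hD]
      exact le_max_left _ _
    set w : EuclideanSpace ℝ (Fin n1) := (A y) (s • v + B y) - (A y') (s • v + B y')
      with hw
    have hdiff : (G p).1 - (G q).1 = t ^ α1 • w := by
      rw [hGp, hGq, hw, smul_sub]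
    have ht1 : (0:ℝ) < t ^ α1 := Real.rpow_pos_of_pos ht α1
    have hnorm : ‖(G p).1 - (G q).1‖ = t ^ α1 * ‖w‖ := by
      rw [hdiff, norm_smul, Real.norm_eq_abs, abs_of_pos ht1]
    rw [hnorm] at hfirst
    have hmul : (t ^ α1 * ‖w‖) ^ (1 / α1) = t * ‖w‖ ^ (1 / α1) := by
      rw [Real.mul_rpow ht1.le (norm_nonneg _), ← Real.rpow_mul ht.le,
        mul_one_div_cancel (ne_of_gt hα1), Real.rpow_one]
    rw [hmul] at hfirst
    have hfirst' : ‖w‖ ^ (1 / α1) ≤ K * M := by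
      have := (mul_le_mul_iff_right₀ ht).mp (by linarith [hfirst] : t * ‖w‖ ^ (1 / α1) ≤ t * (K * M))
      exact this
    have hwle : ‖w‖ ≤ C := by
      have h3 := Real.rpow_le_rpow (Real.rpow_nonneg (norm_nonneg w) _) hfirst' hα1.le
      rwa [← Real.rpow_mul (norm_nonneg w),
        one_div_mul_cancel (ne_of_gt hα1), Real.rpow_one] at h3
    have hweq : w = s • u + c := by
      rw [hw, hu, hc]
      simp only [map_add, LinearIsometryEquiv.map_smul, smul_sub]
      abel
    rwa [← hweq]
  -- contradiction: take s large
  set s : ℝ := (C + ‖c‖ + 1) / ‖u‖ with hs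
  have hsu : s * ‖u‖ = C + ‖c‖ + 1 := div_mul_cancel₀ _ (ne_of_gt hun)
  have h4 : ‖s • u‖ ≤ ‖s • u + c‖ + ‖c‖ := by
    calc ‖s • u‖ = ‖(s • u + c) - c‖ := by rw [add_sub_cancel_right]
    _ ≤ ‖s • u + c‖ + ‖c‖ := norm_sub_le _ _
  have hC0 : 0 ≤ C := Real.rpow_nonneg hKM α1
  have h5 : ‖s • u‖ = s * ‖u‖ := by
    rw [norm_smul, Real.norm_eq_abs, abs_of_pos]
    positivity
  have := key s
  rw [h5, hsu] at h4
  linarith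
end

section
/- Let 𝒩 be a finitely generated group quasi-acting properly on ℝ^n (equipped with a proper metric of polynomial growth of degree n). Then any chain of finitely generated subgroups H_0 < H_1 < ⋯ < H_k of 𝒩, where each H_i has infinite index in H_{i+1}, has length k ≤ n. -/
open Metric MeasureTheory Set
open scoped ENNReal Pointwise

namespace Stmt13Aux

lemma exists_separated {X : Type*} [PseudoMetricSpace X] (T : Finset X) :
    ∃ T' : Finset X, T' ⊆ T ∧ (∀ a ∈ T', ∀ b ∈ T', a ≠ b → 1 < dist a b) ∧
      ∀ t ∈ T, ∃ t' ∈ T', dist t t' ≤ 1 := by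
  classical
  induction T using Finset.strongInduction with
  | _ T ih =>
    rcases T.eq_empty_or_nonempty with rfl | ⟨t0, ht0⟩
    · exact ⟨∅, by simp⟩
    · set T₁ := T.filter (fun t => 1 < dist t t0) with hT₁
      have hss : T₁ ⊂ T := by
        refine ⟨Finset.filter_subset _ _, fun hsub => ?_⟩
        have := Finset.mem_filter.mp (hsub ht0)
        simp only [dist_self] at this
        exact absurd this.2 (by norm_num)
      obtain ⟨T', hsub, hsep, hcov⟩ := ih T₁ hss
      have hT'mem : ∀ a ∈ T', 1 < dist a t0 := fun a ha =>
        (Finset.mem_filter.mp (hsub ha)).2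
      refine ⟨insert t0 T', ?_, ?_, ?_⟩
      · intro a ha
        rcases Finset.mem_insert.mp ha with rfl | ha
        · exact ht0
        · exact (Finset.filter_subset _ _) (hsub ha)
      · intro a ha b hb hab
        rcases Finset.mem_insert.mp ha with ha' | ha'
        · rcases Finset.mem_insert.mp hb with hb' | hb'
          · exact absurd (ha'.trans hb'.symm) hab
          · rw [ha', dist_comm]; exact hT'mem b hb'
        · rcases Finset.mem_insert.mp hb with hb' | hb'
          · rw [hb']; exact hT'mem a ha'
          · exact hsep a ha' b hb' hab
      · intro t ht
        by_cases h1 : 1 < dist t t0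
        · obtain ⟨t', ht', hd⟩ := hcov t (Finset.mem_filter.mpr ⟨ht, h1⟩)
          exact ⟨t', Finset.mem_insert_of_mem ht', hd⟩
        · exact ⟨t0, Finset.mem_insert_self _ _, le_of_not_gt h1⟩

lemma packing (n : ℕ) (r : ℝ) (hr : 0 ≤ r) (T' : Finset (EuclideanSpace ℝ (Fin n)))
    (hsep : ∀ a ∈ T', ∀ b ∈ T', a ≠ b → 1 < dist a b)
    (hball : ∀ t ∈ T', dist t 0 ≤ r) : (T'.card : ℝ) ≤ 2 ^ n * (r + 1) ^ n := by
  classical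
  rcases Nat.eq_zero_or_pos n with rfl | hn
  · -- subsingleton space
    have hsub : Subsingleton (EuclideanSpace ℝ (Fin 0)) := by
      constructor; intro a b; ext i; exact absurd i.2 (by simp)
    have : T'.card ≤ 1 := by
      refine Finset.card_le_one.mpr fun a ha b hb => hsub.allEq a b
    simp only [pow_zero, mul_one]
    exact_mod_cast this
  · have hnt : Nontrivial (EuclideanSpace ℝ (Fin n)) := by
      obtain ⟨m, rfl⟩ := Nat.exists_eq_add_of_lt hn
      infer_instance
    set μ : Measure (EuclideanSpace ℝ (Fin n)) := volume with hμ
    have hdisj : (↑T' : Set (EuclideanSpace ℝ (Fin n))).Pairwise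
        (Function.onFun Disjoint fun t => ball t (1/2)) := by
      intro a ha b hb hab
      exact ball_disjoint_ball (by linarith [hsep a ha b hb hab])
    have hmeas : μ (⋃ t ∈ T', ball t (1/2)) = ∑ t ∈ T', μ (ball t (1/2)) :=
      measure_biUnion_finset hdisj fun t _ => measurableSet_ball
    have hsubball : (⋃ t ∈ T', ball t (1/2)) ⊆ ball (0 : EuclideanSpace ℝ (Fin n)) (r + 1) := by
      intro z hz
      simp only [Set.mem_iUnion] at hz
      obtain ⟨t, ht, hzt⟩ := hz
      have := hball t ht
      rw [mem_ball] at hzt ⊢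
      have : dist z 0 ≤ dist z t + dist t 0 := dist_triangle _ _ _
      linarith [mem_ball.mp hzt]
    have hrank : Module.finrank ℝ (EuclideanSpace ℝ (Fin n)) = n := finrank_euclideanSpace_fin
    have hball2 : ∀ t : EuclideanSpace ℝ (Fin n),
        μ (ball t (1/2)) = ENNReal.ofReal ((1/2) ^ n) * μ (ball 0 1) := by
      intro t
      rw [Measure.addHaar_ball μ t (by norm_num : (0:ℝ) ≤ 1/2), hrank]
    have hbig : μ (ball (0 : EuclideanSpace ℝ (Fin n)) (r + 1))
        = ENNReal.ofReal ((r+1) ^ n) * μ (ball 0 1) := by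
      rw [Measure.addHaar_ball μ _ (by linarith : (0:ℝ) ≤ r + 1), hrank]
    have hsum : (T'.card : ℝ≥0∞) * (ENNReal.ofReal ((1/2) ^ n) * μ (ball 0 1))
        ≤ ENNReal.ofReal ((r+1) ^ n) * μ (ball 0 1) := by
      have e1 : ∑ t ∈ T', μ (ball t (1/2))
          = (T'.card : ℝ≥0∞) * (ENNReal.ofReal ((1/2) ^ n) * μ (ball 0 1)) := by
        rw [Finset.sum_congr rfl fun t _ => hball2 t, Finset.sum_const, nsmul_eq_mul]
      rw [← e1, ← hbig, ← hmeas]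
      exact measure_mono hsubball
    have hV0 : μ (ball (0 : EuclideanSpace ℝ (Fin n)) 1) ≠ 0 :=
      (measure_ball_pos μ 0 one_pos).ne'
    have hVt : μ (ball (0 : EuclideanSpace ℝ (Fin n)) 1) ≠ ⊤ := measure_ball_lt_top.ne
    have h1 : (T'.card : ℝ≥0∞) * ENNReal.ofReal ((1/2) ^ n) ≤ ENNReal.ofReal ((r+1) ^ n) := by
      rw [← mul_assoc] at hsum
      exact (ENNReal.mul_le_mul_iff_left hV0 hVt).mp hsum
    have h2 : ENNReal.ofReal ((T'.card : ℝ) * (1/2) ^ n) ≤ ENNReal.ofReal ((r+1) ^ n) := by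
      rwa [ENNReal.ofReal_mul (by positivity), ENNReal.ofReal_natCast]
    have h3 : (T'.card : ℝ) * (1/2) ^ n ≤ (r+1) ^ n :=
      (ENNReal.ofReal_le_ofReal_iff (by positivity)).mp h2
    have h6 := mul_le_mul_of_nonneg_right h3 (by positivity : (0:ℝ) ≤ 2 ^ n)
    have h7 : (T'.card:ℝ) * (1/2) ^ n * 2 ^ n = T'.card := by
      rw [mul_assoc, ← mul_pow]; norm_num
    rw [h7] at h6
    linarith


lemma growth_poly {n : ℕ} {𝒩 : Type*} [Group 𝒩]
    (A : 𝒩 → EuclideanSpace ℝ (Fin n) → EuclideanSpace ℝ (Fin n))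
    (hproper : ∀ R : ℝ, ∃ M : ℕ, ∀ x y : EuclideanSpace ℝ (Fin n),
      {γ : 𝒩 | ∃ p, dist p x ≤ R ∧ dist (A γ p) y ≤ R}.Finite ∧
      {γ : 𝒩 | ∃ p, dist p x ≤ R ∧ dist (A γ p) y ≤ R}.ncard ≤ M) :
    ∃ Q : ℝ, 0 ≤ Q ∧ ∀ r : ℝ, 0 ≤ r →
      {γ : 𝒩 | dist (A γ 0) 0 ≤ r}.Finite ∧
      ({γ : 𝒩 | dist (A γ 0) 0 ≤ r}.ncard : ℝ) ≤ Q * (r + 1) ^ n := by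
  classical
  obtain ⟨M₀, hM₀⟩ := hproper 0
  obtain ⟨M₁, hM₁⟩ := hproper 1
  refine ⟨(M₀ : ℝ) * M₁ * 2 ^ n, by positivity, fun r hr => ?_⟩
  set Sset := {γ : 𝒩 | dist (A γ 0) 0 ≤ r} with hSset
  have hfin : Sset.Finite := by
    refine Set.Finite.subset ((hproper r).choose_spec 0 0).1 ?_
    intro γ hγ
    exact ⟨0, by simpa using hr, hγ⟩
  refine ⟨hfin, ?_⟩
  set Sf := hfin.toFinset with hSf
  have hScard : Sset.ncard = Sf.card := by
    rw [hSf, ← Set.ncard_coe_finset, Set.Finite.coe_toFinset]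
  set T : Finset (EuclideanSpace ℝ (Fin n)) := Sf.image (fun γ => A γ 0) with hT
  -- fibers over T have ≤ M₀ elements
  have hcard1 : Sf.card ≤ M₀ * T.card := by
    refine Finset.card_le_mul_card_image Sf M₀ fun a ha => ?_
    have hsub : (↑(Sf.filter fun γ => A γ 0 = a) : Set 𝒩) ⊆
        {γ : 𝒩 | ∃ p, dist p 0 ≤ 0 ∧ dist (A γ p) a ≤ 0} := by
      intro γ hγ
      simp only [Finset.coe_filter, Set.mem_setOf_eq] at hγ
      exact ⟨0, by simp, by simp [hγ.2]⟩
    calc (Sf.filter fun γ => A γ 0 = a).card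
        = (↑(Sf.filter fun γ => A γ 0 = a) : Set 𝒩).ncard := (Set.ncard_coe_finset _).symm
      _ ≤ {γ : 𝒩 | ∃ p, dist p 0 ≤ 0 ∧ dist (A γ p) a ≤ 0}.ncard :=
          Set.ncard_le_ncard hsub (hM₀ 0 a).1
      _ ≤ M₀ := (hM₀ 0 a).2
  -- separated subset of T
  obtain ⟨T', hT'sub, hsep, hcov⟩ := exists_separated T
  -- each 1-ball around t' ∈ T' contains ≤ M₁ points of T
  have hcard2 : T.card ≤ T'.card * M₁ := by
    have hbiU : T ⊆ T'.biUnion (fun t' => T.filter (fun t => dist t t' ≤ 1)) := by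
      intro t ht
      obtain ⟨t', ht', hd⟩ := hcov t ht
      exact Finset.mem_biUnion.mpr ⟨t', ht', Finset.mem_filter.mpr ⟨ht, hd⟩⟩
    calc T.card ≤ (T'.biUnion (fun t' => T.filter (fun t => dist t t' ≤ 1))).card :=
          Finset.card_le_card hbiU
      _ ≤ ∑ t' ∈ T', (T.filter (fun t => dist t t' ≤ 1)).card := Finset.card_biUnion_le
      _ ≤ ∑ _t' ∈ T', M₁ := by
          refine Finset.sum_le_sum fun t' _ => ?_
          have himg : T.filter (fun t => dist t t' ≤ 1)
              = (Sf.filter (fun γ => dist (A γ 0) t' ≤ 1)).image (fun γ => A γ 0) := by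
            rw [hT, Finset.filter_image]
          rw [himg]
          have hsub : (↑(Sf.filter fun γ => dist (A γ 0) t' ≤ 1) : Set 𝒩) ⊆
              {γ : 𝒩 | ∃ p, dist p 0 ≤ 1 ∧ dist (A γ p) t' ≤ 1} := by
            intro γ hγ
            simp only [Finset.coe_filter, Set.mem_setOf_eq] at hγ
            exact ⟨0, by simp, hγ.2⟩
          calc ((Sf.filter (fun γ => dist (A γ 0) t' ≤ 1)).image (fun γ => A γ 0)).card
              ≤ (Sf.filter (fun γ => dist (A γ 0) t' ≤ 1)).card := Finset.card_image_le
            _ = (↑(Sf.filter fun γ => dist (A γ 0) t' ≤ 1) : Set 𝒩).ncard :=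
                (Set.ncard_coe_finset _).symm
            _ ≤ {γ : 𝒩 | ∃ p, dist p 0 ≤ 1 ∧ dist (A γ p) t' ≤ 1}.ncard :=
                Set.ncard_le_ncard hsub (hM₁ 0 t').1
            _ ≤ M₁ := (hM₁ 0 t').2
      _ = T'.card * M₁ := by rw [Finset.sum_const, smul_eq_mul]
  -- packing bound on T'
  have hcard3 : (T'.card : ℝ) ≤ 2 ^ n * (r + 1) ^ n := by
    refine packing n r hr T' hsep fun t ht => ?_
    obtain ⟨γ, hγ, rfl⟩ := Finset.mem_image.mp (hT'sub ht)
    have := (Set.Finite.mem_toFinset hfin).mp hγ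
    exact this
  -- combine
  have h1 : (Sf.card : ℝ) ≤ M₀ * (T'.card * M₁) := by
    have := hcard1.trans (Nat.mul_le_mul_left M₀ hcard2)
    exact_mod_cast this
  rw [hScard]
  calc (Sf.card : ℝ) ≤ M₀ * (T'.card * M₁) := h1
    _ = (M₀ : ℝ) * M₁ * T'.card := by ring
    _ ≤ (M₀ : ℝ) * M₁ * (2 ^ n * (r + 1) ^ n) := by
        refine mul_le_mul_of_nonneg_left hcard3 (by positivity)
    _ = (M₀ : ℝ) * M₁ * 2 ^ n * (r + 1) ^ n := by ring


variable {G : Type*} [Group G] [DecidableEq G]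

/-- symmetrized generating set -/
def gens (S : Finset G) : Finset G := S ∪ S.image (fun x => x⁻¹)

/-- products of at most `j` generators -/
def P (S : Finset G) : ℕ → Finset G
  | 0 => {1}
  | j + 1 => P S j ∪ P S j * gens S

lemma one_mem_P (S : Finset G) : ∀ j, (1 : G) ∈ P S j
  | 0 => by simp [P]
  | j + 1 => Finset.mem_union_left _ (one_mem_P S j)

lemma P_mono (S : Finset G) (j : ℕ) : P S j ⊆ P S (j + 1) :=
  Finset.subset_union_left

lemma P_mono_le (S : Finset G) : ∀ {j j' : ℕ}, j ≤ j' → P S j ⊆ P S j' := by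
  intro j j' h
  induction j' with
  | zero => rw [Nat.le_zero.mp h]
  | succ j'' ih =>
    rcases Nat.lt_or_ge j (j'' + 1) with h' | h'
    · exact (ih (Nat.lt_succ_iff.mp h')).trans (P_mono S j'')
    · rw [Nat.le_antisymm h h']

lemma mul_gen_mem_P (S : Finset G) {j : ℕ} {v s : G} (hv : v ∈ P S j) (hs : s ∈ gens S) :
    v * s ∈ P S (j + 1) :=
  Finset.mem_union_right _ (Finset.mul_mem_mul hv hs)

lemma mem_P_succ {S : Finset G} {j : ℕ} {w : G} (hw : w ∈ P S (j + 1)) :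
    w ∈ P S j ∨ ∃ v ∈ P S j, ∃ s ∈ gens S, w = v * s := by
  rcases Finset.mem_union.mp hw with h | h
  · exact Or.inl h
  · obtain ⟨v, hv, s, hs, rfl⟩ := Finset.mem_mul.mp h
    exact Or.inr ⟨v, hv, s, hs, rfl⟩

lemma gen_mul_P (S : Finset G) : ∀ j, ∀ s ∈ gens S, ∀ v ∈ P S j, s * v ∈ P S (j + 1) := by
  intro j
  induction j with
  | zero => intro s hs v hv
            simp only [P, Finset.mem_singleton] at hv
            subst hv
    -- s * 1 = s ∈ P 1
            rw [mul_one]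
            have : s = 1 * s := (one_mul s).symm
            rw [this]
            exact mul_gen_mem_P S (one_mem_P S 0) hs
  | succ j ih =>
    intro s hs v hv
    rcases mem_P_succ hv with h | ⟨u, hu, t, ht, rfl⟩
    · exact P_mono S (j+1) (ih s hs v h)
    · rw [← mul_assoc]
      exact mul_gen_mem_P S (ih s hs u hu) ht

lemma gens_inv {S : Finset G} {s : G} (hs : s ∈ gens S) : s⁻¹ ∈ gens S := by
  rcases Finset.mem_union.mp hs with h | h
  · exact Finset.mem_union_right _ (Finset.mem_image.mpr ⟨s, h, rfl⟩)
  · obtain ⟨b, hb, rfl⟩ := Finset.mem_image.mp h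
    exact Finset.mem_union_left _ (by simpa using hb)

lemma P_inv (S : Finset G) : ∀ j, ∀ v ∈ P S j, v⁻¹ ∈ P S j := by
  intro j
  induction j with
  | zero => intro v hv; simp only [P, Finset.mem_singleton] at hv ⊢; simp [hv]
  | succ j ih =>
    intro v hv
    rcases mem_P_succ hv with h | ⟨u, hu, t, ht, rfl⟩
    · exact P_mono S j (ih v h)
    · rw [mul_inv_rev]
      exact gen_mul_P S j t⁻¹ (gens_inv ht) u⁻¹ (ih u hu)

lemma P_mul (S : Finset G) : ∀ j', ∀ j, ∀ v ∈ P S j, ∀ w ∈ P S j', v * w ∈ P S (j + j') := by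
  intro j'
  induction j' with
  | zero => intro j v hv w hw
            simp only [P, Finset.mem_singleton] at hw
            subst hw; simpa using hv
  | succ j' ih =>
    intro j v hv w hw
    rcases mem_P_succ hw with h | ⟨u, hu, t, ht, rfl⟩
    · exact P_mono_le S (by omega) (ih j v hv w h)
    · rw [← mul_assoc]
      have : v * u ∈ P S (j + j') := ih j v hv u hu
      have := mul_gen_mem_P S this ht
      exact this

lemma P_subset_closure (S : Finset G) : ∀ j, ∀ v ∈ P S j, v ∈ Subgroup.closure (S : Set G) := by
  intro j
  induction j with
  | zero => intro v hv; simp only [P, Finset.mem_singleton] at hv; subst hv; exact one_mem _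
  | succ j ih =>
    intro v hv
    rcases mem_P_succ hv with h | ⟨u, hu, t, ht, rfl⟩
    · exact ih v h
    · refine mul_mem (ih u hu) ?_
      rcases Finset.mem_union.mp ht with h' | h'
      · exact Subgroup.subset_closure h'
      · obtain ⟨b, hb, rfl⟩ := Finset.mem_image.mp h'
        exact inv_mem (Subgroup.subset_closure hb)

lemma exists_P_of_mem_closure {S : Finset G} {h : G}
    (hh : h ∈ Subgroup.closure (S : Set G)) : ∃ j, h ∈ P S j := by
  induction hh using Subgroup.closure_induction with
  | mem x hx => exact ⟨1, by
      have : x ∈ gens S := Finset.mem_union_left _ hx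
      have := mul_gen_mem_P S (one_mem_P S 0) this
      simpa using this⟩
  | one => exact ⟨0, one_mem_P S 0⟩
  | mul x y _ _ ihx ihy =>
    obtain ⟨j, hj⟩ := ihx
    obtain ⟨j', hj'⟩ := ihy
    exact ⟨j + j', P_mul S j' j x hj y hj'⟩
  | inv x _ ihx =>
    obtain ⟨j, hj⟩ := ihx
    exact ⟨j, P_inv S j x hj⟩


lemma infinite_image_mk {G : Type*} [Group G] (H' H : Subgroup G) (hle : H' ≤ H)
    (h0 : H'.relIndex H = 0) :
    ((fun g => (QuotientGroup.mk g : G ⧸ H')) '' (H : Set G)).Infinite := by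
  have hne : Nonempty (H ⧸ H'.subgroupOf H) := ⟨QuotientGroup.mk 1⟩
  have hinf : Infinite (H ⧸ H'.subgroupOf H) := by
    have : Nat.card (H ⧸ H'.subgroupOf H) = 0 := h0
    rcases Nat.card_eq_zero.mp this with h | h
    · exact absurd hne (not_nonempty_iff.mpr h)
    · exact h
  set f : H ⧸ H'.subgroupOf H → G ⧸ H' :=
    Quotient.map' Subtype.val (fun a b hab => by
      rw [QuotientGroup.leftRel_apply] at hab ⊢
      exact (Subgroup.mem_subgroupOf.mp hab)) with hf
  have hinj : Function.Injective f := by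
    intro a b
    induction a using Quotient.inductionOn' with
    | h a =>
      induction b using Quotient.inductionOn' with
      | h b =>
        intro hab
        simp only [hf, Quotient.map'_mk''] at hab
        rw [Quotient.eq''] at hab ⊢
        rw [QuotientGroup.leftRel_apply] at hab ⊢
        exact Subgroup.mem_subgroupOf.mpr hab
  refine Set.infinite_of_injective_forall_mem hinj (fun a => ?_)
  induction a using Quotient.inductionOn' with
  | h a => exact ⟨(a : G), a.2, rfl⟩


lemma exists_coset_reps (S : Finset G) (H' : Subgroup G)
    (hle : H' ≤ Subgroup.closure (S : Set G))
    (h0 : H'.relIndex (Subgroup.closure (S : Set G)) = 0) (m : ℕ) :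
    ∃ F : Finset G, F.card = m + 1 ∧ (∀ t ∈ F, t ∈ P S m) ∧
      ∀ a ∈ F, ∀ b ∈ F, a ≠ b → a * b⁻¹ ∉ H' := by
  classical
  set q : G → G ⧸ H' := fun g => QuotientGroup.mk g⁻¹ with hq
  have hqiff : ∀ a b : G, q a = q b ↔ a * b⁻¹ ∈ H' := by
    intro a b
    show (QuotientGroup.mk a⁻¹ : G ⧸ H') = QuotientGroup.mk b⁻¹ ↔ _
    rw [QuotientGroup.eq, inv_inv]
  set Qf : ℕ → Finset (G ⧸ H') := fun j => (P S j).image q with hQf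
  have hQmono : ∀ j, Qf j ⊆ Qf (j+1) := fun j => Finset.image_subset_image (P_mono S j)
  have hQmonole : ∀ {j j'}, j ≤ j' → Qf j ⊆ Qf j' :=
    fun h => Finset.image_subset_image (P_mono_le S h)
  have hstab : ∀ j, Qf (j+1) ⊆ Qf j → Qf (j+1+1) ⊆ Qf (j+1) := by
    intro j hj x hx
    obtain ⟨w, hw, rfl⟩ := Finset.mem_image.mp hx
    rcases mem_P_succ hw with h | ⟨v, hv, s, hs, rfl⟩
    · exact Finset.mem_image.mpr ⟨w, h, rfl⟩
    · have hqv : q v ∈ Qf j := hj (Finset.mem_image.mpr ⟨v, hv, rfl⟩)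
      obtain ⟨u, hu, hqu⟩ := Finset.mem_image.mp hqv
      have heq : q (u * s) = q (v * s) := by
        rw [hqiff]
        have h2 : u * s * (v * s)⁻¹ = u * v⁻¹ := by group
        rw [h2]
        exact (hqiff u v).mp hqu
      exact heq ▸ Finset.mem_image.mpr ⟨u * s, mul_gen_mem_P S hu hs, rfl⟩
  have hstrict : ∀ j, ¬ (Qf (j+1) ⊆ Qf j) := by
    intro j hj
    have hprop : ∀ i, Qf (j + i + 1) ⊆ Qf (j + i) := by
      intro i
      induction i with
      | zero => exact hj
      | succ i ih => exact hstab (j + i) ih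
    have hall : ∀ i, Qf (j + i) ⊆ Qf j := by
      intro i
      induction i with
      | zero => exact subset_rfl
      | succ i ih => exact (hprop i).trans ih
    have himg : ∀ h ∈ Subgroup.closure (S : Set G), q h ∈ Qf j := by
      intro h hh
      obtain ⟨j', hj'⟩ := exists_P_of_mem_closure hh
      have hmem : q h ∈ Qf j' := Finset.mem_image.mpr ⟨h, hj', rfl⟩
      rcases le_or_gt j' j with hle' | hlt
      · exact hQmonole hle' hmem
      · have : Qf j' ⊆ Qf j := by
          have := hall (j' - j)
          rwa [show j + (j' - j) = j' by omega] at this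
        exact this hmem
    have hsub : (q '' (Subgroup.closure (S : Set G) : Set G)) ⊆ ↑(Qf j) := by
      rintro _ ⟨g, hg, rfl⟩
      exact himg g hg
    have hqimg : (q '' (Subgroup.closure (S : Set G) : Set G)) =
        ((fun g => (QuotientGroup.mk g : G ⧸ H')) '' (Subgroup.closure (S : Set G) : Set G)) := by
      ext y
      constructor
      · rintro ⟨g, hg, rfl⟩
        exact ⟨g⁻¹, inv_mem hg, rfl⟩
      · rintro ⟨g, hg, rfl⟩
        exact ⟨g⁻¹, inv_mem hg, by simp [hq]⟩
    have hinfin := infinite_image_mk H' (Subgroup.closure (S : Set G)) hle h0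
    rw [← hqimg] at hinfin
    exact hinfin ((Qf j).finite_toSet.subset hsub)
  have hcard : ∀ j, j + 1 ≤ (Qf j).card := by
    intro j
    induction j with
    | zero =>
      have : q 1 ∈ Qf 0 := Finset.mem_image.mpr ⟨1, one_mem_P S 0, rfl⟩
      exact Finset.card_pos.mpr ⟨_, this⟩
    | succ j ih =>
      have hss : Qf j ⊂ Qf (j+1) := ⟨hQmono j, fun h => hstrict j h⟩
      have := Finset.card_lt_card hss
      omega
  obtain ⟨Q', hQ'sub, hQ'card⟩ := Finset.exists_subset_card_eq (hcard m)
  have hpre : ∀ y ∈ Q', ∃ g, g ∈ P S m ∧ q g = y := by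
    intro y hy
    obtain ⟨g, hg, rfl⟩ := Finset.mem_image.mp (hQ'sub hy)
    exact ⟨g, hg, rfl⟩
  choose! f hf1 hf2 using hpre
  refine ⟨Q'.image f, ?_, ?_, ?_⟩
  · rw [Finset.card_image_of_injOn, hQ'card]
    intro y hy y' hy' hff
    rw [← hf2 y hy, ← hf2 y' hy', hff]
  · intro t ht
    obtain ⟨y, hy, rfl⟩ := Finset.mem_image.mp ht
    exact hf1 y hy
  · intro a ha b hb hab hmem
    obtain ⟨y, hy, rfl⟩ := Finset.mem_image.mp ha
    obtain ⟨y', hy', rfl⟩ := Finset.mem_image.mp hb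
    have : q (f y) = q (f y') := (hqiff _ _).mpr hmem
    rw [hf2 y hy, hf2 y' hy'] at this
    exact hab (this ▸ rfl)


lemma P_disp (S : Finset G) (D : G → ℝ) (d1 c' : ℝ) (hc' : 0 ≤ c')
    (hD1 : D 1 ≤ d1) (hmul : ∀ v : G, ∀ s ∈ gens S, D (v * s) ≤ D v + c') :
    ∀ j, ∀ v ∈ P S j, D v ≤ d1 + j * c' := by
  intro j
  induction j with
  | zero =>
    intro v hv
    simp only [P, Finset.mem_singleton] at hv
    subst hv
    simpa using hD1
  | succ j ih =>
    intro v hv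
    rcases mem_P_succ hv with h | ⟨u, hu, t, ht, rfl⟩
    · have := ih v h
      have : (j:ℝ) * c' ≤ (j+1) * c' := by nlinarith
      push_cast
      linarith [ih v h]
    · have h1 := hmul u t ht
      have h2 := ih u hu
      push_cast
      linarith

end Stmt13Aux


/-- If a finitely generated group quasi-acts properly on `ℝ^n`, then any chain of finitely
generated subgroups, each of infinite index in the next, has length at most `n`. -/
theorem stmt_13 (n : ℕ) (𝒩 : Type*) [Group 𝒩]
    (A : 𝒩 → EuclideanSpace ℝ (Fin n) → EuclideanSpace ℝ (Fin n))
    (K C : ℝ) (hK : 1 ≤ K) (hC : 0 ≤ C)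
    (hqi : ∀ γ x y, dist x y / K - C ≤ dist (A γ x) (A γ y) ∧
      dist (A γ x) (A γ y) ≤ K * dist x y + C)
    (hcomp : ∀ γ η x, dist (A γ (A η x)) (A (γ * η) x) ≤ C)
    (hproper : ∀ R : ℝ, ∃ M : ℕ, ∀ x y : EuclideanSpace ℝ (Fin n),
      {γ : 𝒩 | ∃ p, dist p x ≤ R ∧ dist (A γ p) y ≤ R}.Finite ∧
      {γ : 𝒩 | ∃ p, dist p x ≤ R ∧ dist (A γ p) y ≤ R}.ncard ≤ M)
    (k : ℕ) (H : Fin (k + 1) → Subgroup 𝒩)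
    (hfg : ∀ i, (H i).FG)
    (hchain : ∀ i : Fin k, H i.castSucc ≤ H i.succ)
    (hinf : ∀ i : Fin k, (H i.castSucc).relIndex (H i.succ) = 0) :
    k ≤ n := by
  classical
  set D : 𝒩 → ℝ := fun γ => dist (A γ 0) 0 with hD
  have hK0 : (0:ℝ) < K := lt_of_lt_of_le one_pos hK
  have hDnn : ∀ γ, 0 ≤ D γ := fun γ => dist_nonneg
  -- displacement of the identity
  have hD1 : D 1 ≤ 2*K*C := by
    have h1 := hcomp 1 1 0
    rw [one_mul] at h1
    have h2 := (hqi 1 0 (A 1 0)).1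
    have h3 : dist 0 (A 1 0) / K - C ≤ C := by
      calc dist (0 : EuclideanSpace ℝ (Fin n)) (A 1 0) / K - C
          ≤ dist (A 1 0) (A 1 (A 1 0)) := h2
        _ = dist (A 1 (A 1 0)) (A 1 0) := dist_comm _ _
        _ ≤ C := h1
    have h4 : dist (0 : EuclideanSpace ℝ (Fin n)) (A 1 0) ≤ 2*C*K :=
      (div_le_iff₀ hK0).mp (by linarith)
    have : D 1 = dist (0 : EuclideanSpace ℝ (Fin n)) (A 1 0) := dist_comm _ _
    rw [this]; linarith
  -- displacement subadditivity
  have hDmul : ∀ γ s : 𝒩, D (γ * s) ≤ D γ + K * D s + 2*C := by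
    intro γ s
    have h1 := hcomp γ s 0
    have h2 := (hqi γ (A s 0) 0).2
    calc D (γ * s) = dist (A (γ*s) 0) 0 := rfl
      _ ≤ dist (A (γ*s) 0) (A γ (A s 0)) + dist (A γ (A s 0)) (A γ 0)
          + dist (A γ 0) 0 := dist_triangle4 _ _ _ _
      _ ≤ C + (K * dist (A s 0) 0 + C) + D γ := by
          have h1' : dist (A (γ*s) 0) (A γ (A s 0)) ≤ C := by
            rw [dist_comm]; exact h1
          exact add_le_add (add_le_add h1' h2) le_rfl
      _ = D γ + K * D s + 2*C := by rw [hD]; ring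
  have hDinv : ∀ s : 𝒩, D s⁻¹ ≤ K * D s + 2*C + 2*K*C := by
    intro s
    have h1 := hcomp s⁻¹ s 0
    rw [inv_mul_cancel] at h1
    have h2 := (hqi s⁻¹ 0 (A s 0)).2
    calc D s⁻¹ = dist (A s⁻¹ 0) 0 := rfl
      _ ≤ dist (A s⁻¹ 0) (A s⁻¹ (A s 0)) + dist (A s⁻¹ (A s 0)) (A 1 0)
          + dist (A 1 0) 0 := dist_triangle4 _ _ _ _
      _ ≤ (K * dist (0 : EuclideanSpace ℝ (Fin n)) (A s 0) + C) + C + (2*K*C) := by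
          exact add_le_add (add_le_add h2 h1) hD1
      _ = K * D s + 2*C + 2*K*C := by
          rw [hD]; simp only []
          rw [dist_comm (0 : EuclideanSpace ℝ (Fin n)) (A s 0)]
          ring
  -- polynomial growth
  obtain ⟨Q, hQ0, hgrow⟩ := Stmt13Aux.growth_poly A hproper
  have hgrow' : ∀ r : ℝ, 0 ≤ r → {γ : 𝒩 | D γ ≤ r}.Finite ∧
      ({γ : 𝒩 | D γ ≤ r}.ncard : ℝ) ≤ Q * (r + 1) ^ n := fun r hr => hgrow r hr
  -- chain step
  have hstep : ∀ i : Fin k, ∃ a : ℝ, 0 ≤ a ∧ ∀ m : ℕ, ∀ r : ℝ, 0 ≤ r →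
      (m+1) * {γ : 𝒩 | γ ∈ H i.castSucc ∧ D γ ≤ r}.ncard ≤
      {γ : 𝒩 | γ ∈ H i.succ ∧ D γ ≤ r + a * (m+1)}.ncard := by
    intro i
    obtain ⟨S, hS⟩ := hfg i.succ
    -- bound on generator displacements
    obtain ⟨c0, hc0⟩ := (S.finite_toSet.image D).bddAbove
    set c : ℝ := max c0 0 with hc
    have hc0' : (0:ℝ) ≤ c := le_max_right _ _
    have hcS : ∀ s ∈ S, D s ≤ c := fun s hs =>
      le_trans (hc0 ⟨s, hs, rfl⟩) (le_max_left _ _)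
    set cg : ℝ := K*c + 2*C + 2*K*C + c with hcg
    have hcg0 : 0 ≤ cg := by nlinarith
    have hgenb : ∀ s ∈ Stmt13Aux.gens S, D s ≤ cg := by
      intro s hs
      rcases Finset.mem_union.mp hs with h | h
      · have := hcS s h
        have hKc : 0 ≤ K * c := by positivity
        rw [hcg]; nlinarith
      · obtain ⟨t, ht, rfl⟩ := Finset.mem_image.mp h
        have h1 := hDinv t
        have h2 : K * D t ≤ K * c := mul_le_mul_of_nonneg_left (hcS t ht) (le_of_lt hK0)
        rw [hcg]; linarith [hDnn t⁻¹]
    set cstep : ℝ := K * cg + 2*C with hcstep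
    have hcstep0 : 0 ≤ cstep := by positivity
    have hPd : ∀ j, ∀ v ∈ Stmt13Aux.P S j, D v ≤ 2*K*C + j * cstep := by
      refine Stmt13Aux.P_disp S D (2*K*C) cstep hcstep0 hD1 ?_
      intro v s hs
      have h1 := hDmul v s
      have h2 : K * D s ≤ K * cg := mul_le_mul_of_nonneg_left (hgenb s hs) (le_of_lt hK0)
      rw [hcstep]; linarith
    set a : ℝ := 2*K*K*C + 2*C + K*cstep with ha
    have ha0 : 0 ≤ a := by positivity
    refine ⟨a, ha0, ?_⟩
    intro m r hr
    obtain ⟨F, hFcard, hFP, hFdist⟩ := Stmt13Aux.exists_coset_reps S (H i.castSucc)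
      (hS ▸ hchain i) (hS ▸ hinf i) m
    have hfinB : {γ : 𝒩 | γ ∈ H i.castSucc ∧ D γ ≤ r}.Finite :=
      Set.Finite.subset (hgrow' r hr).1 (fun γ hγ => hγ.2)
    set B : Finset 𝒩 := hfinB.toFinset with hB
    have hRnn : (0:ℝ) ≤ r + a * (m+1) := by positivity
    have hfinT : {γ : 𝒩 | γ ∈ H i.succ ∧ D γ ≤ r + a * (m+1)}.Finite :=
      Set.Finite.subset (hgrow' _ hRnn).1 (fun γ hγ => hγ.2)
    -- injective multiplication map
    have hinj : Set.InjOn (fun p : 𝒩 × 𝒩 => p.1 * p.2) ↑(B ×ˢ F) := by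
      intro p hp q hq hpq
      simp only [Finset.coe_product, Set.mem_prod] at hp hq
      simp only at hpq
      have hBmem : ∀ x ∈ B, x ∈ H i.castSucc := by
        intro x hx
        exact ((Set.Finite.mem_toFinset hfinB).mp hx).1
      by_cases hts : p.2 = q.2
      · have : p.1 = q.1 := by
          have := hpq
          rw [hts] at this
          exact mul_right_cancel this
        exact Prod.ext this hts
      · exfalso
        have h1 : p.2 * q.2⁻¹ = p.1⁻¹ * q.1 := by
          calc p.2 * q.2⁻¹ = p.1⁻¹ * (p.1 * p.2) * q.2⁻¹ := by group
            _ = p.1⁻¹ * (q.1 * q.2) * q.2⁻¹ := by rw [hpq]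
            _ = p.1⁻¹ * q.1 := by group
        have h2 : p.2 * q.2⁻¹ ∈ H i.castSucc := by
          rw [h1]
          exact mul_mem (inv_mem (hBmem p.1 hp.1)) (hBmem q.1 hq.1)
        exact hFdist p.2 hp.2 q.2 hq.2 hts h2
    have hsubT : ((B ×ˢ F).image (fun p : 𝒩 × 𝒩 => p.1 * p.2) : Set 𝒩) ⊆
        {γ : 𝒩 | γ ∈ H i.succ ∧ D γ ≤ r + a * (m+1)} := by
      intro γ hγ
      simp only [Finset.coe_image, Set.mem_image, Finset.mem_coe,
        Finset.mem_product] at hγ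
      obtain ⟨⟨h', t⟩, ⟨hh', ht⟩, rfl⟩ := hγ
      have hmem1 : h' ∈ H i.castSucc := ((Set.Finite.mem_toFinset hfinB).mp hh').1
      have hDh : D h' ≤ r := ((Set.Finite.mem_toFinset hfinB).mp hh').2
      have htP := hFP t ht
      have htH : t ∈ H i.succ := hS ▸ Stmt13Aux.P_subset_closure S m t htP
      have hDt : D t ≤ 2*K*C + m * cstep := hPd m t htP
      constructor
      · exact mul_mem (hchain i hmem1) htH
      · have h1 := hDmul h' t
        have h2 : K * D t ≤ K * (2*K*C + m * cstep) :=
          mul_le_mul_of_nonneg_left hDt (le_of_lt hK0)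
        have h3 : K * (2*K*C + m * cstep) + 2*C ≤ a * (m+1) := by
          rw [ha]
          have hm1 : (1:ℝ) ≤ (m:ℝ) + 1 := by have := Nat.cast_nonneg (α := ℝ) m; linarith
          have e1 : K * (2*K*C + m*cstep) + 2*C
              = (2*K*K*C + 2*C) + (K*cstep) * m := by ring
          have e2 : (2*K*K*C + 2*C + K*cstep) * ((m:ℝ)+1)
              = (2*K*K*C + 2*C) + (K*cstep) * m + (2*K*K*C + 2*C) * m + K*cstep := by
            ring
          have h4 : 0 ≤ (2*K*K*C + 2*C) * (m:ℝ) := by positivity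
          have h5 : 0 ≤ K * cstep := by positivity
          push_cast
          rw [e1, e2]
          linarith
        linarith
    -- counting
    have hcount : (B ×ˢ F).card =
        ((B ×ˢ F).image (fun p : 𝒩 × 𝒩 => p.1 * p.2)).card :=
      (Finset.card_image_of_injOn hinj).symm
    have hncardB : {γ : 𝒩 | γ ∈ H i.castSucc ∧ D γ ≤ r}.ncard = B.card := by
      rw [hB, ← Set.ncard_coe_finset, Set.Finite.coe_toFinset]
    calc (m+1) * {γ : 𝒩 | γ ∈ H i.castSucc ∧ D γ ≤ r}.ncard
        = B.card * F.card := by rw [hncardB, hFcard]; ring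
      _ = (B ×ˢ F).card := (Finset.card_product _ _).symm
      _ = ((B ×ˢ F).image (fun p : 𝒩 × 𝒩 => p.1 * p.2)).card := hcount
      _ = (((B ×ˢ F).image (fun p : 𝒩 × 𝒩 => p.1 * p.2) : Finset 𝒩) : Set 𝒩).ncard :=
          (Set.ncard_coe_finset _).symm
      _ ≤ {γ : 𝒩 | γ ∈ H i.succ ∧ D γ ≤ r + a * (m+1)}.ncard :=
          Set.ncard_le_ncard hsubT hfinT
  -- iterate over the chain
  have hkey : ∀ i : ℕ, ∀ hik : i ≤ k, ∃ b : ℝ, 1 ≤ b ∧ ∀ m : ℕ,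
      (m+1)^i ≤ {γ : 𝒩 | γ ∈ H ⟨i, Nat.lt_succ_of_le hik⟩ ∧ D γ ≤ b * (m+1)}.ncard := by
    intro i
    induction i with
    | zero =>
      intro hik
      refine ⟨2*K*C + 1, by nlinarith, fun m => ?_⟩
      have hm1 : (1:ℝ) ≤ (m:ℝ)+1 := by
        have := Nat.cast_nonneg (α := ℝ) m; linarith
      have hb0 : (0:ℝ) ≤ (2*K*C+1) * (m+1) := by positivity
      have hfin : {γ : 𝒩 | γ ∈ H ⟨0, Nat.lt_succ_of_le hik⟩ ∧
          D γ ≤ (2*K*C+1)*(m+1)}.Finite :=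
        Set.Finite.subset (hgrow' _ hb0).1 (fun γ hγ => hγ.2)
      have hmem : (1:𝒩) ∈ {γ : 𝒩 | γ ∈ H ⟨0, Nat.lt_succ_of_le hik⟩ ∧
          D γ ≤ (2*K*C+1)*(m+1)} := by
        refine ⟨one_mem _, ?_⟩
        nlinarith
      have hpos : 0 < {γ : 𝒩 | γ ∈ H ⟨0, Nat.lt_succ_of_le hik⟩ ∧
          D γ ≤ (2*K*C+1)*(m+1)}.ncard := (Set.ncard_pos hfin).mpr ⟨1, hmem⟩
      calc (m+1)^0 = 1 := pow_zero _
        _ ≤ _ := hpos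
    | succ i ih =>
      intro hik
      obtain ⟨b, hb1, hb⟩ := ih (Nat.le_of_succ_le hik)
      obtain ⟨a, ha0, ha⟩ := hstep ⟨i, Nat.lt_of_succ_le hik⟩
      refine ⟨b + a, by linarith, fun m => ?_⟩
      have hm0 : (0:ℝ) ≤ (m:ℝ)+1 := by positivity
      have hr0 : (0:ℝ) ≤ b*(m+1) := mul_nonneg (by linarith) hm0
      have h1 := ha m (b*(m+1)) hr0
      have h2 := hb m
      have heq : b*(m+1) + a*(m+1) = (b+a)*(m+1) := by ring
      rw [heq] at h1
      calc (m+1)^(i+1) = (m+1)^i * (m+1) := pow_succ _ _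
        _ ≤ {γ : 𝒩 | γ ∈ H ⟨i, Nat.lt_succ_of_le (Nat.le_of_succ_le hik)⟩ ∧
              D γ ≤ b * (m+1)}.ncard * (m+1) := Nat.mul_le_mul_right _ h2
        _ = (m+1) * {γ : 𝒩 | γ ∈ H ⟨i, Nat.lt_succ_of_le (Nat.le_of_succ_le hik)⟩ ∧
              D γ ≤ b * (m+1)}.ncard := Nat.mul_comm _ _
        _ ≤ _ := h1
  -- conclude
  obtain ⟨b, hb1, hb⟩ := hkey k le_rfl
  by_contra hlt
  push_neg at hlt
  set m : ℕ := ⌈Q * (2*b)^n⌉₊ with hm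
  have hCf : Q * (2*b)^n < (m:ℝ) + 1 := lt_of_le_of_lt (Nat.le_ceil _) (lt_add_one (m:ℝ))
  have hr0 : (0:ℝ) ≤ b * (m+1) := by positivity
  have h1 := hb m
  have h2 : {γ : 𝒩 | γ ∈ H ⟨k, Nat.lt_succ_of_le le_rfl⟩ ∧ D γ ≤ b * (m+1)}.ncard ≤
      {γ : 𝒩 | D γ ≤ b * (m+1)}.ncard :=
    Set.ncard_le_ncard (fun γ hγ => hγ.2) (hgrow' _ hr0).1
  have h3 := (hgrow' (b * (m+1)) hr0).2
  have h4 : ((m+1:ℕ):ℝ)^k ≤ Q * (b * (m+1) + 1)^n := by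
    have := h1.trans h2
    calc ((m+1:ℕ):ℝ)^k = (((m+1)^k : ℕ) : ℝ) := by push_cast; ring
      _ ≤ ({γ : 𝒩 | D γ ≤ b * (m+1)}.ncard : ℝ) := by exact_mod_cast this
      _ ≤ Q * (b * (m+1) + 1)^n := h3
  have h5 : b * (m+1) + 1 ≤ 2*b*((m:ℝ)+1) := by nlinarith [Nat.cast_nonneg (α := ℝ) m]
  have h6 : ((m:ℝ)+1)^k ≤ Q * (2*b)^n * ((m:ℝ)+1)^n := by
    have hle : Q * (b * (m+1) + 1)^n ≤ Q * (2*b*((m:ℝ)+1))^n := by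
      refine mul_le_mul_of_nonneg_left (pow_le_pow_left₀ (by positivity) h5 n) hQ0
    have : (2*b*((m:ℝ)+1))^n = (2*b)^n * ((m:ℝ)+1)^n := by rw [mul_pow]
    rw [this] at hle
    calc ((m:ℝ)+1)^k = ((m+1:ℕ):ℝ)^k := by push_cast; ring
      _ ≤ Q * (b * (m+1) + 1)^n := h4
      _ ≤ _ := hle.trans (le_of_eq (by ring))
  have h7 : ((m:ℝ)+1)^(n+1) ≤ ((m:ℝ)+1)^k := by
    refine pow_le_pow_right₀ (by norm_num) (by omega)
  have h8 : Q * (2*b)^n * ((m:ℝ)+1)^n < ((m:ℝ)+1) * ((m:ℝ)+1)^n := by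
    refine mul_lt_mul_of_pos_right hCf (by positivity)
  have h9 : ((m:ℝ)+1)^(n+1) = ((m:ℝ)+1) * ((m:ℝ)+1)^n := by ring
  linarith
end

section
/- Let γ be an element of a group of K-bilipschitz almost translations of (ℝ^n, D), γ(x_1,…,x_r) = (x_1 + B_{1,γ}(x_2,…,x_r), …, x_{r−1} + B_{r−1,γ}(x_r), x_r + B_{r,γ}), with each B_{j,γ} bounded by B^max_{j,γ}. Then for all y, y' ∈ ℝ^{n_{i+1}} × ⋯ × ℝ^{n_r}: |B_{i,γ}(y) − B_{i,γ}(y')| ≤ 2K^{α_i} max_{j>i} (B^max_{j,γ})^{α_i/α_j}. -/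
/-- Oscillation bound for the translation parts of a `K`-bilipschitz almost translation of
`(ℝ^n, D)`: `|B_{i,γ}(y) − B_{i,γ}(y')| ≤ max_{j>i} 2K^{α_i}(B^max_{j,γ})^{α_i/α_j}`. -/
theorem stmt_16 (r : ℕ) (n : Fin (r + 1) → ℕ) (α : Fin (r + 1) → ℝ)
    (hα : ∀ i, 0 < α i) (hmono : StrictMono α)
    (D : (∀ i, EuclideanSpace ℝ (Fin (n i))) → (∀ i, EuclideanSpace ℝ (Fin (n i))) → ℝ)
    (hD : ∀ x y, D x y = ⨆ i, ‖x i - y i‖ ^ (1 / α i))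
    (K : ℝ) (hK : 1 ≤ K)
    (B : ∀ i : Fin (r + 1),
      (∀ j, EuclideanSpace ℝ (Fin (n j))) → EuclideanSpace ℝ (Fin (n i)))
    (hBdep : ∀ i x x', (∀ j, i < j → x j = x' j) → B i x = B i x')
    (γ : (∀ i, EuclideanSpace ℝ (Fin (n i))) → ∀ i, EuclideanSpace ℝ (Fin (n i)))
    (hγ : ∀ x i, γ x i = x i + B i x)
    (Bmax : Fin (r + 1) → ℝ) (hBmax : ∀ i x, ‖B i x‖ ≤ Bmax i)
    (hbilip : ∀ (m : ℕ) p q, D p q / K ≤ D (γ^[m] p) (γ^[m] q) ∧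
      D (γ^[m] p) (γ^[m] q) ≤ K * D p q) :
    ∀ i x x', ‖B i x - B i x'‖ ≤
      ⨆ j : {j : Fin (r + 1) // i < j},
        2 * K ^ α i * Bmax (j : Fin (r + 1)) ^ (α i / α (j : Fin (r + 1))) := by
  intro i x x'
  by_cases hi : ∃ j : Fin (r + 1), i < j
  case neg =>
    have he : IsEmpty {j : Fin (r + 1) // i < j} := ⟨fun j => hi ⟨j.1, j.2⟩⟩
    have hBx : B i x = B i x' := hBdep i x x' (fun j hj => absurd ⟨j, hj⟩ hi)
    rw [Real.iSup_of_isEmpty, hBx, sub_self, norm_zero]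
  case pos =>
    obtain ⟨j0, hj0⟩ := hi
    haveI : Nonempty {j : Fin (r + 1) // i < j} := ⟨⟨j0, hj0⟩⟩
    have hK0 : (0:ℝ) < K := lt_of_lt_of_le one_pos hK
    have hBmax0 : ∀ j, 0 ≤ Bmax j := fun j =>
      le_trans (norm_nonneg _) (hBmax j (fun _ => 0))
    have h1α : ∀ j, (0:ℝ) < 1 / α j := fun j => one_div_pos.mpr (hα j)
    -- the max over higher indices of Bmax j ^ (1/α j)
    set fmax : {j : Fin (r + 1) // i < j} → ℝ := fun j => Bmax j.1 ^ (1 / α j.1) with hfmax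
    have bddmax : BddAbove (Set.range fmax) := (Set.finite_range fmax).bddAbove
    set Dmax : ℝ := ⨆ j, fmax j with hDmaxdef
    have hDmax0 : 0 ≤ Dmax :=
      le_trans (Real.rpow_nonneg (hBmax0 j0) _) (le_ciSup bddmax ⟨j0, hj0⟩)
    -- iterate formula
    have hiter : ∀ (m : ℕ) z (j : Fin (r + 1)),
        γ^[m] z j = z j + ∑ k ∈ Finset.range m, B j (γ^[k] z) := by
      intro m
      induction m with
      | zero => intro z j; simp
      | succ m ih =>
        intro z j
        rw [Function.iterate_succ_apply', hγ, ih, Finset.sum_range_succ, add_assoc]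
    -- agreement on higher coordinates is preserved by iterates
    have htail : ∀ u v, (∀ j, i < j → u j = v j) →
        ∀ (k : ℕ) (j : Fin (r + 1)), i < j → γ^[k] u j = γ^[k] v j := by
      intro u v huv k
      induction k with
      | zero => simpa using huv
      | succ k ih =>
        intro j hj
        rw [Function.iterate_succ_apply', Function.iterate_succ_apply', hγ, hγ, ih j hj,
          hBdep j (γ^[k] u) (γ^[k] v) (fun j' hj' => ih j' (hj.trans hj'))]
    -- basic D facts
    have hDnonneg : ∀ p q, 0 ≤ D p q := by
      intro p q
      rw [hD]
      exact le_trans (Real.rpow_nonneg (norm_nonneg _) _)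
        (le_ciSup (f := fun j : Fin (r + 1) => ‖p j - q j‖ ^ (1 / α j))
          ((Set.finite_range _).bddAbove) i)
    have hDcoord : ∀ p q (j : Fin (r + 1)), ‖p j - q j‖ ^ (1 / α j) ≤ D p q := by
      intro p q j
      rw [hD]
      exact le_ciSup (f := fun j : Fin (r + 1) => ‖p j - q j‖ ^ (1 / α j))
        ((Set.finite_range _).bddAbove) j
    -- Estimate A : the per-pair estimate coming from bilipschitzness of γ^[m]
    have hA : ∀ (m : ℕ) u v, (∀ j, ¬ i < j → u j = v j) →
        ‖∑ k ∈ Finset.range m, (B i (γ^[k] u) - B i (γ^[k] v))‖ ≤ (K * D u v) ^ α i := by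
      intro m u v huv
      have hcoord : γ^[m] u i - γ^[m] v i
          = ∑ k ∈ Finset.range m, (B i (γ^[k] u) - B i (γ^[k] v)) := by
        rw [hiter, hiter, huv i (lt_irrefl i), Finset.sum_sub_distrib]
        abel
      have h1 : ‖∑ k ∈ Finset.range m, (B i (γ^[k] u) - B i (γ^[k] v))‖ ^ (1 / α i)
          ≤ K * D u v := by
        rw [← hcoord]
        exact le_trans (hDcoord _ _ i) (hbilip m u v).2
      calc ‖∑ k ∈ Finset.range m, (B i (γ^[k] u) - B i (γ^[k] v))‖
          = (‖∑ k ∈ Finset.range m, (B i (γ^[k] u) - B i (γ^[k] v))‖ ^ (1 / α i)) ^ α i := by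
            rw [← Real.rpow_mul (norm_nonneg _), one_div_mul_cancel (hα i).ne', Real.rpow_one]
        _ ≤ (K * D u v) ^ α i :=
            Real.rpow_le_rpow (Real.rpow_nonneg (norm_nonneg _) _) h1 (hα i).le
    -- Estimate B : oscillation along the orbit
    have hB1 : ∀ z (m : ℕ), ‖B i z - B i (γ^[m] z)‖ ≤ (K * Dmax) ^ α i := by
      intro z m
      set v : ∀ j, EuclideanSpace ℝ (Fin (n j)) := fun j => if i < j then γ z j else z j with hv
      have hlow : ∀ j, ¬ i < j → z j = v j := fun j hj => by simp [hv, hj]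
      have hup : ∀ j, i < j → v j = γ z j := fun j hj => by simp [hv, hj]
      have hBv : ∀ k : ℕ, B i (γ^[k] v) = B i (γ^[k + 1] z) := by
        intro k
        rw [Function.iterate_succ_apply]
        exact hBdep i _ _ (fun j hj => htail v (γ z) (fun j' hj' => hup j' hj') k j hj)
      have hsum : ∑ k ∈ Finset.range m, (B i (γ^[k] z) - B i (γ^[k] v))
          = B i z - B i (γ^[m] z) := by
        have heq : ∀ k ∈ Finset.range m, B i (γ^[k] z) - B i (γ^[k] v)
            = B i (γ^[k] z) - B i (γ^[k + 1] z) := fun k _ => by rw [hBv k]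
        rw [Finset.sum_congr rfl heq, Finset.sum_range_sub']
        simp
      have hDzv : D z v ≤ Dmax := by
        rw [hD]
        apply ciSup_le
        intro j
        by_cases hj : i < j
        · have hzv : z j - v j = -(B j z) := by rw [hup j hj, hγ]; abel
          rw [hzv, norm_neg]
          calc ‖B j z‖ ^ (1 / α j) ≤ Bmax j ^ (1 / α j) :=
                Real.rpow_le_rpow (norm_nonneg _) (hBmax j z) (h1α j).le
            _ ≤ Dmax := le_ciSup bddmax ⟨j, hj⟩
        · rw [← hlow j hj, sub_self, norm_zero, Real.zero_rpow (h1α j).ne']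
          exact hDmax0
      calc ‖B i z - B i (γ^[m] z)‖
          = ‖∑ k ∈ Finset.range m, (B i (γ^[k] z) - B i (γ^[k] v))‖ := by rw [hsum]
        _ ≤ (K * D z v) ^ α i := hA m z v hlow
        _ ≤ (K * Dmax) ^ α i :=
            Real.rpow_le_rpow (mul_nonneg hK0.le (hDnonneg _ _))
              (mul_le_mul_of_nonneg_left hDzv hK0.le) (hα i).le
    -- main pair
    set q : ∀ j, EuclideanSpace ℝ (Fin (n j)) := fun j => if i < j then x' j else x j with hq
    have hlow : ∀ j, ¬ i < j → x j = q j := fun j hj => by simp [hq, hj]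
    have hBq : B i q = B i x' := (hBdep i x' q (fun j hj => by simp [hq, hj])).symm
    set C' : ℝ := (K * Dmax) ^ α i with hC'
    have hC'0 : 0 ≤ C' := Real.rpow_nonneg (mul_nonneg hK0.le hDmax0) _
    set M : ℝ := (K * D x q) ^ α i with hM
    set d : EuclideanSpace ℝ (Fin (n i)) := B i x - B i x' with hd
    have key : ∀ m : ℕ, (m : ℝ) * ‖d‖ ≤ M + m * (2 * C') := by
      intro m
      have h2 : ∀ k : ℕ, ‖(B i (γ^[k] x) - B i (γ^[k] q)) - d‖ ≤ 2 * C' := by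
        intro k
        have he : (B i (γ^[k] x) - B i (γ^[k] q)) - d
            = (B i (γ^[k] x) - B i x) - (B i (γ^[k] q) - B i q) := by
          rw [hd, ← hBq]; abel
        rw [he]
        calc ‖(B i (γ^[k] x) - B i x) - (B i (γ^[k] q) - B i q)‖
            ≤ ‖B i (γ^[k] x) - B i x‖ + ‖B i (γ^[k] q) - B i q‖ := norm_sub_le _ _
          _ ≤ C' + C' := by
              refine add_le_add ?_ ?_
              · rw [norm_sub_rev]; exact hB1 x k
              · rw [norm_sub_rev]; exact hB1 q k
          _ = 2 * C' := by ring
      have e1 : ∑ k ∈ Finset.range m, d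
          = (∑ k ∈ Finset.range m, (B i (γ^[k] x) - B i (γ^[k] q)))
            - ∑ k ∈ Finset.range m, ((B i (γ^[k] x) - B i (γ^[k] q)) - d) := by
        rw [← Finset.sum_sub_distrib]
        simp
      have e2 : ‖∑ k ∈ Finset.range m, d‖ = (m : ℝ) * ‖d‖ := by
        rw [Finset.sum_const, Finset.card_range, ← Nat.cast_smul_eq_nsmul ℝ, norm_smul,
          Real.norm_natCast]
      calc (m : ℝ) * ‖d‖ = ‖∑ k ∈ Finset.range m, d‖ := e2.symm
        _ ≤ ‖∑ k ∈ Finset.range m, (B i (γ^[k] x) - B i (γ^[k] q))‖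
            + ‖∑ k ∈ Finset.range m, ((B i (γ^[k] x) - B i (γ^[k] q)) - d)‖ := by
              rw [e1]; exact norm_sub_le _ _
        _ ≤ M + m * (2 * C') := by
            refine add_le_add (hA m x q hlow) ?_
            calc ‖∑ k ∈ Finset.range m, ((B i (γ^[k] x) - B i (γ^[k] q)) - d)‖
                ≤ ∑ k ∈ Finset.range m, ‖(B i (γ^[k] x) - B i (γ^[k] q)) - d‖ :=
                  norm_sum_le _ _
              _ ≤ ∑ k ∈ Finset.range m, (2 * C') :=
                  Finset.sum_le_sum (fun k _ => h2 k)
              _ = m * (2 * C') := by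
                  rw [Finset.sum_const, Finset.card_range, nsmul_eq_mul]
    have hM0 : 0 ≤ M := Real.rpow_nonneg (mul_nonneg hK0.le (hDnonneg _ _)) _
    have hdle : ‖d‖ ≤ 2 * C' := by
      by_contra h
      push_neg at h
      have hpos : 0 < ‖d‖ - 2 * C' := sub_pos.mpr h
      obtain ⟨m, hm⟩ := exists_nat_gt (M / (‖d‖ - 2 * C'))
      have h3 : M < (m : ℝ) * (‖d‖ - 2 * C') := (div_lt_iff₀ hpos).mp hm
      rw [mul_sub] at h3
      linarith [key m]
    -- conclude
    obtain ⟨jm, hjm⟩ := Finite.exists_max fmax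
    have hDmaxeq : Dmax = fmax jm := le_antisymm (ciSup_le hjm) (le_ciSup bddmax jm)
    have hC'eq : C' = K ^ α i * Bmax jm.1 ^ (α i / α jm.1) := by
      rw [hC', hDmaxeq, hfmax,
        Real.mul_rpow hK0.le (Real.rpow_nonneg (hBmax0 jm.1) _),
        ← Real.rpow_mul (hBmax0 jm.1), one_div_mul_eq_div]
    calc ‖B i x - B i x'‖ = ‖d‖ := by rw [hd]
      _ ≤ 2 * C' := hdle
      _ = 2 * K ^ α i * Bmax jm.1 ^ (α i / α jm.1) := by rw [hC'eq]; ring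
      _ ≤ ⨆ j : {j : Fin (r + 1) // i < j},
            2 * K ^ α i * Bmax (j : Fin (r + 1)) ^ (α i / α (j : Fin (r + 1))) :=
          le_ciSup (f := fun j : {j : Fin (r + 1) // i < j} =>
              2 * K ^ α i * Bmax (j : Fin (r + 1)) ^ (α i / α (j : Fin (r + 1))))
            ((Set.finite_range _).bddAbove) jm
end

section
/- For almost translations γ, η of (ℝ^n, D) as above, the bound functions satisfy: (i) B^max_{i,γη} ≤ B^max_{i,γ} + B^max_{i,η}; and (ii) l·B^max_{i,γ} ≤ B^max_{i,γ^l} + l·ε_{i,γ}, where ε_{i,γ} = max_{j>i} 2K^{α_i}(B^max_{j,γ})^{α_i/α_j}. -/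
/-- For almost translations `γ, η` of `ℝ^n = ⊕ℝ^{n_i}`: (i) the translation bounds are
subadditive under composition, `B^max_{i,γη} ≤ B^max_{i,γ} + B^max_{i,η}`; and (ii)
`l·B^max_{i,γ} ≤ B^max_{i,γ^l} + l·ε_{i,γ}` where `ε_{i,γ}` bounds the oscillation of
`B_{i,γ}`. -/
theorem stmt_17 (r : ℕ) (n : Fin (r + 1) → ℕ)
    (Bγ Bη : ∀ i : Fin (r + 1),
      (∀ j, EuclideanSpace ℝ (Fin (n j))) → EuclideanSpace ℝ (Fin (n i)))
    (γ η : (∀ i, EuclideanSpace ℝ (Fin (n i))) → ∀ i, EuclideanSpace ℝ (Fin (n i)))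
    (hγ : ∀ x i, γ x i = x i + Bγ i x)
    (hη : ∀ x i, η x i = x i + Bη i x)
    (ε : Fin (r + 1) → ℝ)
    (hosc : ∀ i x x', ‖Bγ i x - Bγ i x'‖ ≤ ε i) :
    (∀ (i : Fin (r + 1)) (Mγ Mη : ℝ), (∀ x, ‖Bγ i x‖ ≤ Mγ) → (∀ x, ‖Bη i x‖ ≤ Mη) →
      ∀ x, ‖γ (η x) i - x i‖ ≤ Mγ + Mη) ∧
    (∀ (l : ℕ) (i : Fin (r + 1)) (x : ∀ j, EuclideanSpace ℝ (Fin (n j))),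
      (l : ℝ) * ‖Bγ i x‖ ≤ ‖(γ^[l] x) i - x i‖ + l * ε i) := by
  constructor
  · intro i Mγ Mη hMγ hMη x
    have : γ (η x) i - x i = Bγ i (η x) + Bη i x := by
      rw [hγ, hη]; abel
    rw [this]
    calc ‖Bγ i (η x) + Bη i x‖ ≤ ‖Bγ i (η x)‖ + ‖Bη i x‖ := norm_add_le _ _
      _ ≤ Mγ + Mη := add_le_add (hMγ _) (hMη _)
  · intro l i x
    have key : ∀ l : ℕ, ‖(l : ℝ) • Bγ i x - ((γ^[l] x) i - x i)‖ ≤ l * ε i := by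
      intro l
      induction l with
      | zero => simp
      | succ l ih =>
        have heps : ‖Bγ i x - Bγ i (γ^[l] x)‖ ≤ ε i := hosc _ _ _
        have hstep : (γ^[l + 1] x) i = (γ^[l] x) i + Bγ i (γ^[l] x) := by
          rw [Function.iterate_succ_apply', hγ]
        have : ((l : ℝ) + 1) • Bγ i x - ((γ^[l + 1] x) i - x i)
            = ((l : ℝ) • Bγ i x - ((γ^[l] x) i - x i))
              + (Bγ i x - Bγ i (γ^[l] x)) := by
          rw [hstep, add_smul, one_smul]; abel
        push_cast
        rw [this]
        calc _ ≤ ‖(l : ℝ) • Bγ i x - ((γ^[l] x) i - x i)‖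
              + ‖Bγ i x - Bγ i (γ^[l] x)‖ := norm_add_le _ _
          _ ≤ l * ε i + ε i := add_le_add ih heps
          _ = (l + 1) * ε i := by ring
    have := key l
    calc (l : ℝ) * ‖Bγ i x‖ = ‖(l : ℝ) • Bγ i x‖ := by
          rw [norm_smul]; simp
      _ ≤ ‖(γ^[l] x) i - x i‖ + ‖(l : ℝ) • Bγ i x - ((γ^[l] x) i - x i)‖ := by
          have := norm_add_le ((γ^[l] x) i - x i)
            ((l : ℝ) • Bγ i x - ((γ^[l] x) i - x i))
          simpa using this
      _ ≤ ‖(γ^[l] x) i - x i‖ + l * ε i := by linarith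
end
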